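/- arXiv:0802.2820 — 6 statements merged into one kernel-verified Lean document; each statement's English description precedes it below -/
import Mathlib

section
/- Let Q be a real Hilbert space and A : Q → Q a bounded linear operator such that exp(sA) is unitary for every s ∈ ℝ (equivalently, A is skew-adjoint). Let L : Q × Q → ℝ be such that v ↦ L(x,v) is Fréchet differentiable for each x, with momentum π : Q × Q → Q, assume π is Fréchet differentiable, and assume the weak symmetry property π(exp(sA)x, exp(sA)v) = exp(sA) π(x,v) for all s ∈ ℝ and (x,v) ∈ Q × Q. Define the integral of motion I(x,v) = ⟨π(x,v), A x⟩ and let σ be the symplectic form associated with π. Then for all (x,v) ∈ Q × Q and all tangent vectors (x́,v́) ∈ Q × Q one has σ|_{(x,v)}((Ax, Av),(x́,v́)) = DI|_{(x,v)}(x́,v́); that is, the infinitesimal generator of the lifted symmetry group is the symplectic gradient of the Noether integral I. -/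
open scoped RealInnerProductSpace

/-- For a weak symmetry group `s ↦ exp(sA)` (each `exp(sA)` unitary, and the momentum `p`
commuting with the group), the infinitesimal generator `(Ax, Av)` of the lifted group is the
symplectic gradient of the Noether integral `I(x,v) = ⟪p(x,v), Ax⟫`:
`σ|_{(x,v)}((Ax,Av), ·) = DI|_{(x,v)}(·)`. -/
theorem symmetry_generator_is_symplectic_gradient_of_noether_integral
    {Q : Type*} [NormedAddCommGroup Q] [InnerProductSpace ℝ Q] [CompleteSpace Q]
    (A : Q →L[ℝ] Q)
    (hU : ∀ (s : ℝ) (x y : Q),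
      ⟪NormedSpace.exp (s • A) x, NormedSpace.exp (s • A) y⟫ = ⟪x, y⟫)
    (L : Q → Q → ℝ) (p : Q × Q → Q)
    (hp : ∀ x v : Q, HasFDerivAt (fun v' => L x v') (innerSL ℝ (p (x, v))) v)
    (Dp : Q × Q → (Q × Q →L[ℝ] Q))
    (hDp : ∀ z : Q × Q, HasFDerivAt p (Dp z) z)
    (hsym : ∀ (s : ℝ) (x v : Q),
      p (NormedSpace.exp (s • A) x, NormedSpace.exp (s • A) v)
        = NormedSpace.exp (s • A) (p (x, v)))
    (DI : Q × Q → (Q × Q →L[ℝ] ℝ))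
    (hDI : ∀ z : Q × Q,
      HasFDerivAt (fun w : Q × Q => (⟪p w, A w.1⟫ : ℝ)) (DI z) z) :
    ∀ x v xa va : Q,
      ⟪Dp (x, v) (xa, va), A x⟫ - ⟪Dp (x, v) (A x, A v), xa⟫ = DI (x, v) (xa, va) := by
  intro x v xa va
  -- derivative of s ↦ exp(sA) y at 0 is A y
  have hexp : ∀ y : Q, HasDerivAt (fun s : ℝ => NormedSpace.exp (s • A) y) (A y) 0 := by
    intro y
    simpa using (hasDerivAt_exp_smul_const A (0 : ℝ)).clm_apply (hasDerivAt_const 0 y)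
  -- skew-adjointness: ⟪A a, b⟫ = -⟪a, A b⟫
  have hskew : ∀ a b : Q, ⟪A a, b⟫ = -⟪a, A b⟫ := by
    intro a b
    have h1 : HasDerivAt (fun s : ℝ =>
        (⟪NormedSpace.exp (s • A) a, NormedSpace.exp (s • A) b⟫ : ℝ))
        (⟪a, A b⟫ + ⟪A a, b⟫) 0 := by
      simpa using (hexp a).inner ℝ (hexp b)
    have h2 : HasDerivAt (fun s : ℝ =>
        (⟪NormedSpace.exp (s • A) a, NormedSpace.exp (s • A) b⟫ : ℝ)) 0 0 := by
      have : (fun s : ℝ =>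
          (⟪NormedSpace.exp (s • A) a, NormedSpace.exp (s • A) b⟫ : ℝ))
          = fun _ => (⟪a, b⟫ : ℝ) := funext fun s => hU s a b
      rw [this]; exact hasDerivAt_const 0 _
    have := h1.unique h2
    linarith
  -- Dp (x,v) (A x, A v) = A (p (x,v))
  have hgen : Dp (x, v) (A x, A v) = A (p (x, v)) := by
    have hc : HasDerivAt (fun s : ℝ =>
        (NormedSpace.exp (s • A) x, NormedSpace.exp (s • A) v)) (A x, A v) 0 :=
      (hexp x).prodMk (hexp v)
    have h1 : HasDerivAt (fun s : ℝ =>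
        p (NormedSpace.exp (s • A) x, NormedSpace.exp (s • A) v))
        (Dp (x, v) (A x, A v)) 0 := by
      have hDp' : HasFDerivAt p (Dp (x, v))
          ((NormedSpace.exp ((0:ℝ) • A)) x, (NormedSpace.exp ((0:ℝ) • A)) v) := by
        simpa using hDp (x, v)
      exact hDp'.comp_hasDerivAt 0 hc
    have h2 : HasDerivAt (fun s : ℝ =>
        p (NormedSpace.exp (s • A) x, NormedSpace.exp (s • A) v))
        (A (p (x, v))) 0 := by
      have : (fun s : ℝ =>
          p (NormedSpace.exp (s • A) x, NormedSpace.exp (s • A) v))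
          = fun s : ℝ => NormedSpace.exp (s • A) (p (x, v)) :=
        funext fun s => hsym s x v
      rw [this]; exact hexp _
    exact h1.unique h2
  -- identify DI
  have hI : HasFDerivAt (fun w : Q × Q => (⟪p w, A w.1⟫ : ℝ))
      ((fderivInnerCLM ℝ (p (x, v), A x)).comp
        ((Dp (x, v)).prod (A.comp (ContinuousLinearMap.fst ℝ Q Q)))) (x, v) := by
    exact (hDp (x, v)).inner ℝ ((A.hasFDerivAt).comp _ (hasFDerivAt_fst))
  have hDIeq := (hDI (x, v)).unique hI
  rw [hDIeq]
  simp [fderivInnerCLM, hskew (p (x,v)) xa, hgen, real_inner_comm]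
  ring
end

section
/- Let Q be a real Hilbert space and A : Q → Q a bounded linear operator such that T(s) := exp(sA) is unitary for every s ∈ ℝ. Let L : Q × Q → ℝ be such that v ↦ L(x,v) is Fréchet differentiable for each x, with momentum π, and assume L is invariant under the symmetry group: L(T(s)x, T(s)v) = L(x,v) for all s, x, v. Define the energy E(x,v) = ⟨π(x,v), v⟩ − L(x,v), the Noether integral I(x,v) = ⟨π(x,v), A x⟩, the map R̃(x,v) = (x, v − Ax), and for each t ∈ ℝ the inverse moving-frame lift M̃(t)(x,v) = (T(−t)x, T(−t)(v − Ax)). Then for every t ∈ ℝ: (i) L(M̃(t)(x,v)) = L(R̃(x,v)) for all (x,v) (so the transformed Lagrangian L̃ := L ∘ M̃(t) is independent of t and equals L ∘ R̃); (ii) E(M̃(t)(x,v)) = E(R̃(x,v)) and I(M̃(t)(x,v)) = I(R̃(x,v)); (iii) the Hamiltonian of L̃, namely H̃(x,v) = ⟨π̃(x,v), v⟩ − L̃(x,v) where π̃ is the momentum of L̃, satisfies H̃(x,v) = E(R̃(x,v)) + I(R̃(x,v)) for all (x,v); that is, in the moving frame the Hamiltonian equals the transform of the energy plus the transform of the Noether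 integral. -/
open scoped RealInnerProductSpace

/-- The one-parameter unitary group `T s = exp (s • A)` lifted to the tangent bundle. -/
noncomputable def movingFrameGroup {Q : Type*} [NormedAddCommGroup Q] [NormedSpace ℝ Q]
    (A : Q →L[ℝ] Q) (s : ℝ) : Q →L[ℝ] Q :=
  NormedSpace.exp (s • A)

set_option maxHeartbeats 1000000
set_option synthInstance.maxHeartbeats 1000000

/-- Moving-frame transformations:  let `T s = exp(sA)` be a unitary symmetry group of the
Lagrangian `L`, with momentum `p`, energy `E(x,v) = ⟪p x v, v⟫ − L x v`, Noether integral
`I(x,v) = ⟪p x v, Ax⟫`, `R̃(x,v) = (x, v − Ax)` and inverse moving-frame lift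
`M̃ t (x,v) = (T(−t)x, T(−t)(v − Ax))`.  Then `L ∘ M̃ t = L ∘ R̃`, `E ∘ M̃ t = E ∘ R̃`,
`I ∘ M̃ t = I ∘ R̃`, and the Hamiltonian of the transformed Lagrangian `L̃ = L ∘ M̃ t`
equals `E ∘ R̃ + I ∘ R̃`. -/
theorem moving_frame_hamiltonian_is_energy_plus_noether_integral
    {Q : Type*} [NormedAddCommGroup Q] [InnerProductSpace ℝ Q] [CompleteSpace Q]
    (A : Q →L[ℝ] Q)
    (hU : ∀ (s : ℝ) (x y : Q),
      ⟪movingFrameGroup A s x, movingFrameGroup A s y⟫ = ⟪x, y⟫)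
    (L : Q → Q → ℝ)
    (hinv : ∀ (s : ℝ) (x v : Q),
      L (movingFrameGroup A s x) (movingFrameGroup A s v) = L x v)
    (p : Q → Q → Q)
    (hp : ∀ x v : Q, HasFDerivAt (fun v' => L x v') (innerSL ℝ (p x v)) v)
    (pt : ℝ → Q → Q → Q)
    (hpt : ∀ (t : ℝ) (x v : Q),
      HasFDerivAt
        (fun v' => L (movingFrameGroup A (-t) x) (movingFrameGroup A (-t) (v' - A x)))
        (innerSL ℝ (pt t x v)) v) :
    ∀ (t : ℝ) (x v : Q),
      -- (i) the transformed Lagrangian is independent of `t` and equals `L ∘ R̃`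
      (L (movingFrameGroup A (-t) x) (movingFrameGroup A (-t) (v - A x))
          = L x (v - A x)) ∧
      -- (ii) the transformed energy equals `E ∘ R̃` ...
      (⟪p (movingFrameGroup A (-t) x) (movingFrameGroup A (-t) (v - A x)),
            movingFrameGroup A (-t) (v - A x)⟫
          - L (movingFrameGroup A (-t) x) (movingFrameGroup A (-t) (v - A x))
        = ⟪p x (v - A x), v - A x⟫ - L x (v - A x)) ∧
      -- ... and the transformed Noether integral equals `I ∘ R̃`
      (⟪p (movingFrameGroup A (-t) x) (movingFrameGroup A (-t) (v - A x)),
            A (movingFrameGroup A (-t) x)⟫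
        = ⟪p x (v - A x), A x⟫) ∧
      -- (iii) the Hamiltonian of the transformed Lagrangian equals `E ∘ R̃ + I ∘ R̃`
      (⟪pt t x v, v⟫
          - L (movingFrameGroup A (-t) x) (movingFrameGroup A (-t) (v - A x))
        = (⟪p x (v - A x), v - A x⟫ - L x (v - A x)) + ⟪p x (v - A x), A x⟫) := by
  -- `T t ∘ T (-t) = id`
  have hTinv : ∀ (t : ℝ) (y : Q),
      movingFrameGroup A t (movingFrameGroup A (-t) y) = y := by
    intro t y
    have hc : Commute (t • A) ((-t) • A) := ((Commute.refl A).smul_left t).smul_right (-t)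
    have h1 : movingFrameGroup A t * movingFrameGroup A (-t) = 1 := by
      unfold movingFrameGroup
      letI : NormedAlgebra ℚ (Q →L[ℝ] Q) := NormedAlgebra.restrictScalars ℚ ℝ _
      rw [← NormedSpace.exp_add_of_commute hc]
      have : t • A + (-t) • A = 0 := by
        rw [← add_smul]; simp
      rw [this, NormedSpace.exp_zero]
    calc movingFrameGroup A t (movingFrameGroup A (-t) y)
        = (movingFrameGroup A t * movingFrameGroup A (-t)) y := rfl
      _ = y := by rw [h1]; rfl
  -- `A` commutes with `T s`
  have hAcomm : ∀ (s : ℝ) (y : Q),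
      A (movingFrameGroup A s y) = movingFrameGroup A s (A y) := by
    intro s y
    have hc : Commute A (NormedSpace.exp (s • A)) :=
      ((Commute.refl A).smul_right s).exp_right
    have hc' : A * movingFrameGroup A s = movingFrameGroup A s * A := by
      unfold movingFrameGroup; exact hc.eq
    calc A (movingFrameGroup A s y) = (A * movingFrameGroup A s) y := rfl
      _ = (movingFrameGroup A s * A) y := by rw [hc']
      _ = movingFrameGroup A s (A y) := rfl
  -- invariance under `T (-t)` as well
  have hinv2 : ∀ (t : ℝ) (x v : Q),
      L (movingFrameGroup A (-t) x) (movingFrameGroup A (-t) v) = L x v := by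
    intro t x v
    conv_rhs => rw [← hTinv t x, ← hTinv t v,
      hinv t (movingFrameGroup A (-t) x) (movingFrameGroup A (-t) v)]
  -- equivariance of the momentum paired with transformed vectors
  have hpmap : ∀ (t : ℝ) (x w u : Q),
      ⟪p (movingFrameGroup A (-t) x) (movingFrameGroup A (-t) w),
        movingFrameGroup A (-t) u⟫ = ⟪p x w, u⟫ := by
    intro t x w u
    set T := movingFrameGroup A (-t) with hT
    have h1 : HasFDerivAt (fun v' => L (T x) (T v'))
        ((innerSL ℝ (p (T x) (T w))).comp T) w :=
      (hp (T x) (T w)).comp w T.hasFDerivAt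
    have hfun : (fun v' => L (T x) (T v')) = (fun v' => L x v') :=
      funext fun v' => hinv2 t x v'
    rw [hfun] at h1
    have h2 := h1.unique (hp x w)
    have := congrFun (congrArg DFunLike.coe h2) u
    simpa using this
  intro t x v
  set T := movingFrameGroup A (-t) with hT
  have hL : L (T x) (T (v - A x)) = L x (v - A x) := hinv2 t x (v - A x)
  refine ⟨hL, ?_, ?_, ?_⟩
  · rw [hpmap t x (v - A x) (v - A x), hL]
  · rw [hAcomm (-t) x, hpmap t x (v - A x) (A x)]
  · -- identify `pt t x v` with `p x (v - A x)`
    have h2 : HasFDerivAt (fun v' => L (T x) (T (v' - A x)))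
        (innerSL ℝ (p x (v - A x))) v := by
      have hfun : (fun v' : Q => L (T x) (T (v' - A x)))
          = (fun v' : Q => L x (v' - A x)) :=
        funext fun v' => hinv2 t x (v' - A x)
      rw [hfun]
      have h3 : HasFDerivAt (fun v' : Q => v' - A x)
          (ContinuousLinearMap.id ℝ Q) v := (hasFDerivAt_id v).sub_const (A x)
      have h4 := (hp x (v - A x)).comp v h3
      exact h4
    have h5 := (hpt t x v).unique h2
    have h6 : ⟪pt t x v, v⟫ = ⟪p x (v - A x), v⟫ := by
      have := congrFun (congrArg DFunLike.coe h5) v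
      simpa using this
    have h7 : ⟪p x (v - A x), v⟫
        = ⟪p x (v - A x), v - A x⟫ + ⟪p x (v - A x), A x⟫ := by
      rw [← inner_add_right]
      congr 1
      abel
    rw [h6, h7, hL]
    ring
end

section
/- Let Q and P be real Hilbert spaces, ε > 0, μ ∈ ℝ, λ > 0, and let S : Q → P be a linear bijection satisfying ⟨x, x̃⟩_Q = ε^μ ⟨Sx, Sx̃⟩_P for all x, x̃ ∈ Q (a scaling transformation). Let L : Q × Q → ℝ be such that v ↦ L(x,v) is Fréchet differentiable for each x, with momentum π and Hamiltonian H(x,v) = ⟨π(x,v), v⟩_Q − L(x,v), and assume π is Fréchet differentiable with associated symplectic form σ. Define the inverse lifted scaling 𝕊(X,V) = (S⁻¹X, λ S⁻¹V) on P × P and the macroscopic Lagrangian 𝕃 = L ∘ 𝕊 with momentum Π (computed with the P-inner product) and Hamiltonian ℍ(X,V) = ⟨Π(X,V), V⟩_P − 𝕃(X,V), and let 𝛔 be the symplectic form associated with Π. Then for all (X,V) ∈ P × P: (i) Π(X,V) = λ ε^μ S(π(𝕊(X,V))); (ii) ℍ(X,V) = H(𝕊(X,V)); and (iii) for all tangent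 vectors Ż, Ź ∈ P × P, 𝛔|_{(X,V)}(Ż, Ź) = λ · σ|_{𝕊(X,V)}(𝕊Ż, 𝕊Ź), where 𝕊 acts componentwise on tangent vectors; i.e. the macroscopic symplectic form is λ times the pullback of σ under 𝕊. -/
open scoped RealInnerProductSpace

/-- Transformation of the Lagrangian and Hamiltonian structures under a scaling
transformation.  Let `S : Q → P` be a linear bijection with `⟪x,x̃⟫_Q = ε^μ ⟪Sx,Sx̃⟫_P`,
and let `𝕊(X,V) = (S⁻¹X, lam • S⁻¹V)` be the inverse lifted scaling (with time-scaling
factor `lam = dτ/dt`).  If `p` is the momentum of `L`, `Dp` its derivative, `Pi` the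
momentum of the macroscopic Lagrangian `𝕃 = L ∘ 𝕊` and `DPi` its derivative, then
`Pi = (lam ε^μ) • S ∘ p ∘ 𝕊`, the macroscopic Hamiltonian equals `H ∘ 𝕊`, and the
macroscopic symplectic form is `lam` times the pullback of `σ` under `𝕊`. -/
theorem scaling_transformation_of_hamiltonian_structure
    {Q P : Type*} [NormedAddCommGroup Q] [InnerProductSpace ℝ Q] [CompleteSpace Q]
    [NormedAddCommGroup P] [InnerProductSpace ℝ P] [CompleteSpace P]
    (ε μ lam : ℝ) (hε : 0 < ε) (hlam : 0 < lam)
    (S : Q ≃L[ℝ] P)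
    (hS : ∀ x y : Q, ⟪x, y⟫ = ε ^ μ * ⟪S x, S y⟫)
    (L : Q × Q → ℝ) (p : Q × Q → Q)
    (hp : ∀ x v : Q, HasFDerivAt (fun v' => L (x, v')) (innerSL ℝ (p (x, v))) v)
    (Dp : Q × Q → (Q × Q →L[ℝ] Q))
    (hDp : ∀ z : Q × Q, HasFDerivAt p (Dp z) z)
    (Pi : P × P → P)
    (hPi : ∀ X V : P,
      HasFDerivAt (fun V' => L (S.symm X, lam • S.symm V')) (innerSL ℝ (Pi (X, V))) V)
    (DPi : P × P → (P × P →L[ℝ] P))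
    (hDPi : ∀ Z : P × P, HasFDerivAt Pi (DPi Z) Z) :
    ∀ X V : P,
      -- (i) the macroscopic momentum
      Pi (X, V) = (lam * ε ^ μ) • S (p (S.symm X, lam • S.symm V)) ∧
      -- (ii) the macroscopic Hamiltonian equals the transformed Hamiltonian
      (⟪Pi (X, V), V⟫ - L (S.symm X, lam • S.symm V)
        = ⟪p (S.symm X, lam • S.symm V), lam • S.symm V⟫
          - L (S.symm X, lam • S.symm V)) ∧
      -- (iii) the macroscopic symplectic form is `lam` times the pullback of `σ` under `𝕊`
      (∀ Zd Za : P × P,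
        ⟪DPi (X, V) Za, Zd.1⟫ - ⟪DPi (X, V) Zd, Za.1⟫
          = lam *
            (⟪Dp (S.symm X, lam • S.symm V) (S.symm Za.1, lam • S.symm Za.2), S.symm Zd.1⟫
              - ⟪Dp (S.symm X, lam • S.symm V) (S.symm Zd.1, lam • S.symm Zd.2),
                  S.symm Za.1⟫)) := by
  -- linear map T = 𝕊
  set T : P × P →L[ℝ] Q × Q :=
    ((S.symm : P →L[ℝ] Q).comp (ContinuousLinearMap.fst ℝ P P)).prod
      (lam • (S.symm : P →L[ℝ] Q).comp (ContinuousLinearMap.snd ℝ P P)) with hTdef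
  have hTapp : ∀ Z : P × P, T Z = (S.symm Z.1, lam • S.symm Z.2) := fun Z => rfl
  have key : ∀ X V : P, Pi (X, V) = (lam * ε ^ μ) • S (p (S.symm X, lam • S.symm V)) := by
    intro X V
    have hg : HasFDerivAt (fun V' : P => lam • S.symm V')
        (lam • (S.symm : P →L[ℝ] Q)) V := by
      exact (lam • (S.symm : P →L[ℝ] Q)).hasFDerivAt (x := V)
    have hcomp := (hp (S.symm X) (lam • S.symm V)).comp V hg
    have huniq := (hPi X V).unique hcomp
    refine ext_inner_right ℝ fun w => ?_
    have h1 : ⟪Pi (X, V), w⟫ = lam * ⟪p (S.symm X, lam • S.symm V), S.symm w⟫ := by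
      have := congrArg (fun f : P →L[ℝ] ℝ => f w) huniq
      simpa using this
    rw [h1, hS _ (S.symm w), S.apply_symm_apply, real_inner_smul_left]
    ring
  intro X V
  refine ⟨key X V, ?_, ?_⟩
  · rw [key X V, real_inner_smul_left, real_inner_smul_right,
      hS _ (S.symm V), S.apply_symm_apply]
    ring
  · intro Zd Za
    have hPifun : Pi = fun Z : P × P => (lam * ε ^ μ) • S (p (T Z)) := by
      funext Z
      have := key Z.1 Z.2
      simpa [hTapp] using this
    set Z : P × P := (X, V) with hZ
    set D : P × P →L[ℝ] P :=
      ((lam * ε ^ μ) • ((S : Q →L[ℝ] P).comp (Dp (T Z)))).comp T with hDdef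
    have h1 : HasFDerivAt (fun W => p (T W)) ((Dp (T Z)).comp T) Z :=
      (hDp (T Z)).comp Z (T.hasFDerivAt)
    have h2 : HasFDerivAt (fun W => S (p (T W)))
        ((S : Q →L[ℝ] P).comp ((Dp (T Z)).comp T)) Z :=
      ((S : Q →L[ℝ] P).hasFDerivAt).comp Z h1
    have h3 : HasFDerivAt (fun W => (lam * ε ^ μ) • S (p (T W)))
        ((lam * ε ^ μ) • ((S : Q →L[ℝ] P).comp ((Dp (T Z)).comp T))) Z :=
      h2.const_smul (lam * ε ^ μ)
    have hd : HasFDerivAt Pi D Z := by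
      rw [hPifun]
      convert h3 using 1
      exact ContinuousLinearMap.ext fun W => rfl
    have hDeq : DPi (X, V) = D := (hDPi Z).unique hd
    have happ : ∀ W : P × P,
        DPi (X, V) W
          = (lam * ε ^ μ) • S (Dp (S.symm X, lam • S.symm V)
              (S.symm W.1, lam • S.symm W.2)) := by
      intro W
      rw [hDeq]
      simp [hDdef, hTapp, hZ]
    rw [happ Za, happ Zd, real_inner_smul_left, real_inner_smul_left,
      hS (Dp (S.symm X, lam • S.symm V) (S.symm Za.1, lam • S.symm Za.2)) (S.symm Zd.1),
      hS (Dp (S.symm X, lam • S.symm V) (S.symm Zd.1, lam • S.symm Zd.2)) (S.symm Za.1),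
      S.apply_symm_apply, S.apply_symm_apply]
    ring
end

section
/- Let Φ₀ : ℝ → ℝ be smooth with Φ₀(0) = Φ₀'(0) = 0, set v₂ = Φ₀''(0), v₃ = Φ₀'''(0), v₄ = Φ₀''''(0), and let θ ∈ ℝ. Let X : ℝ × ℝ → ℝ be smooth, 2π-periodic in its second argument φ, and compactly supported in its first argument y. For ε > 0 define 𝕍(ε) = ε^{-1} ∫_ℝ ∫_0^{2π} [ −(ε²/2) X(y,φ) ( X(y+ε, φ+θ) + X(y−ε, φ−θ) − 2X(y,φ) ) + Φ₀(ε X(y,φ)) ] dφ dy. Then there exist C > 0 and ε₀ > 0 such that for all 0 < ε < ε₀: | 𝕍(ε) − ε𝕍₀ − ε²𝕍₁ − ε³𝕍₂ | ≤ C ε⁴, where 𝕍₀ = ∫∫ [ −½ X(y,φ)( X(y,φ+θ) + X(y,φ−θ) − 2X(y,φ) ) + (v₂/2) X(y,φ)² ] dφ dy, 𝕍₁ = ∫∫ [ −½ X(y,φ)( ∂_yX(y,φ+θ) − ∂_yX(y,φ−θ) ) + (v₃/6) X(y,φ)³ ] dφ dy, and 𝕍₂ = ∫∫ [ −¼ X(y,φ)(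 ∂_{yy}X(y,φ+θ) + ∂_{yy}X(y,φ−θ) ) + (v₄/24) X(y,φ)⁴ ] dφ dy. -/
open Set MeasureTheory

/-- Directional partial derivative of a function on `ℝ²` in the direction `d`. -/
noncomputable def pd (d : ℝ × ℝ) (f : ℝ × ℝ → ℝ) (p : ℝ × ℝ) : ℝ :=
  fderiv ℝ f p d

lemma pd_contDiff {F : ℝ × ℝ → ℝ} (hF : ContDiff ℝ (⊤ : ℕ∞) F) :
    ContDiff ℝ (⊤ : ℕ∞) (pd (1, 0) F) :=
  (hF.fderiv_right (m := (⊤ : ℕ∞)) (by exact_mod_cast le_top)).clm_apply contDiff_const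

noncomputable def pdn : ℕ → (ℝ × ℝ → ℝ) → (ℝ × ℝ → ℝ)
  | 0, F => F
  | n + 1, F => pdn n (pd (1, 0) F)

lemma pdn_contDiff (n : ℕ) : ∀ {F : ℝ × ℝ → ℝ}, ContDiff ℝ (⊤ : ℕ∞) F →
    ContDiff ℝ (⊤ : ℕ∞) (pdn n F) := by
  induction n with
  | zero => intro F hF; exact hF
  | succ n ih => intro F hF; exact ih (pd_contDiff hF)

lemma hasDerivAt_line {F : ℝ × ℝ → ℝ} (hF : Differentiable ℝ F) (p v : ℝ × ℝ) (u : ℝ) :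
    HasDerivAt (fun t => F (p + t • v)) (fderiv ℝ F (p + u • v) v) u := by
  have h1 : HasDerivAt (fun t : ℝ => p + t • v) v u := by
    simpa using ((hasDerivAt_id u).smul_const v).const_add p
  exact (hF (p + u • v)).hasFDerivAt.comp_hasDerivAt u h1

lemma fderiv_dir {F : ℝ × ℝ → ℝ} (q : ℝ × ℝ) (a : ℝ) :
    fderiv ℝ F q ((a, 0) : ℝ × ℝ) = a * pd (1, 0) F q := by
  have h : ((a, 0) : ℝ × ℝ) = a • ((1, 0) : ℝ × ℝ) := by
    simp [Prod.smul_def]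
  rw [h, (fderiv ℝ F q).map_smul, smul_eq_mul, pd]

lemma iteratedDeriv_line (n : ℕ) : ∀ (F : ℝ × ℝ → ℝ), ContDiff ℝ (⊤ : ℕ∞) F →
    ∀ (p : ℝ × ℝ) (a u : ℝ),
    iteratedDeriv n (fun t => F (p + t • ((a, 0) : ℝ × ℝ))) u
      = a ^ n * pdn n F (p + u • ((a, 0) : ℝ × ℝ)) := by
  induction n with
  | zero => intro F hF p a u; simp [pdn]
  | succ n ih =>
    intro F hF p a u
    rw [iteratedDeriv_succ']
    have hd : deriv (fun t => F (p + t • ((a, 0) : ℝ × ℝ)))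
        = fun t : ℝ => a * pd (1, 0) F (p + t • ((a, 0) : ℝ × ℝ)) := by
      funext t
      rw [(hasDerivAt_line (hF.differentiable (by simp)) p _ t).deriv, fderiv_dir]
    rw [hd]
    have hsm : ContDiff ℝ (⊤ : ℕ∞) (fun t => pd (1, 0) F (p + t • ((a, 0) : ℝ × ℝ))) :=
      (pd_contDiff hF).comp (contDiff_const.add (contDiff_id.smul (contDiff_const (c := ((a, 0) : ℝ × ℝ))) :
        ContDiff ℝ (⊤ : ℕ∞) fun t : ℝ => t • ((a, 0) : ℝ × ℝ)))
    have hmul : iteratedDeriv n (fun t => a * pd (1, 0) F (p + t • ((a, 0) : ℝ × ℝ))) u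
        = a * iteratedDeriv n (fun t => pd (1, 0) F (p + t • ((a, 0) : ℝ × ℝ))) u := by
      rw [← iteratedDerivWithin_univ, ← iteratedDerivWithin_univ]
      exact iteratedDerivWithin_const_mul (mem_univ u) uniqueDiffOn_univ a
        (hsm.of_le (m := (n : WithTop ℕ∞)) (by exact_mod_cast le_top)).contDiffWithinAt
    rw [hmul, ih (pd (1, 0) F) (pd_contDiff hF) p a u]
    show a * (a ^ n * pdn (n + 1) F _) = _
    ring

lemma taylor_crude (n : ℕ) : ∀ (g : ℝ → ℝ), ContDiff ℝ (⊤ : ℕ∞) g → ∀ (M : ℝ),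
    (∀ s ∈ Icc (0:ℝ) 1, |iteratedDeriv n g s| ≤ M) →
    ∀ t ∈ Icc (0:ℝ) 1,
      |g t - ∑ k ∈ Finset.range n, t ^ k * iteratedDeriv k g 0 / (k.factorial : ℝ)| ≤ M := by
  induction n with
  | zero =>
    intro g hg M hM t ht
    simpa using hM t ht
  | succ n ih =>
    intro g hg M hM t ht
    have hg' : ContDiff ℝ (⊤ : ℕ∞) (deriv g) := (contDiff_infty_iff_deriv.mp hg).2
    have hM' : ∀ s ∈ Icc (0:ℝ) 1, |iteratedDeriv n (deriv g) s| ≤ M := by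
      intro s hs
      rw [← iteratedDeriv_succ']
      exact hM s hs
    have hM0 : 0 ≤ M := le_trans (abs_nonneg _) (hM 0 ⟨le_refl _, zero_le_one⟩)
    set r : ℝ → ℝ := fun t => g t - ∑ k ∈ Finset.range (n+1),
      t ^ k * iteratedDeriv k g 0 / (k.factorial : ℝ) with hr
    have hr0 : r 0 = 0 := by
      simp only [hr]
      rw [Finset.sum_eq_single_of_mem 0 (Finset.mem_range.mpr (Nat.succ_pos n))]
      · simp
      · intro k _ hk
        simp [zero_pow hk]
    have hrd : ∀ u : ℝ, HasDerivAt r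
        (deriv g u - ∑ k ∈ Finset.range n,
          u ^ k * iteratedDeriv k (deriv g) 0 / (k.factorial : ℝ)) u := by
      intro u
      have h1 : HasDerivAt g (deriv g u) u :=
        (hg.differentiable (by simp) u).hasDerivAt
      have h2 : HasDerivAt (fun t : ℝ => ∑ k ∈ Finset.range (n+1),
          t ^ k * iteratedDeriv k g 0 / (k.factorial : ℝ))
          (∑ k ∈ Finset.range (n+1),
            (k : ℝ) * u ^ (k - 1) * iteratedDeriv k g 0 / (k.factorial : ℝ)) u := by
        apply HasDerivAt.fun_sum
        intro k _
        exact ((hasDerivAt_pow k u).mul_const (iteratedDeriv k g 0)).div_const _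
      have h3 : (∑ k ∈ Finset.range (n+1),
            (k : ℝ) * u ^ (k - 1) * iteratedDeriv k g 0 / (k.factorial : ℝ))
          = ∑ k ∈ Finset.range n,
            u ^ k * iteratedDeriv k (deriv g) 0 / (k.factorial : ℝ) := by
        rw [Finset.sum_range_succ']
        simp only [Nat.cast_zero, zero_mul, Nat.factorial_zero, Nat.cast_one, add_zero,
          zero_div]
        apply Finset.sum_congr rfl
        intro k _
        rw [← iteratedDeriv_succ']
        have hfac : ((k+1).factorial : ℝ) = (k+1) * (k.factorial : ℝ) := by
          rw [Nat.factorial_succ]; push_cast; ring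
        have hk1 : ((k:ℝ) + 1) ≠ 0 := by positivity
        rw [hfac]
        simp only [Nat.add_sub_cancel, Nat.cast_add, Nat.cast_one]
        field_simp
      rw [← h3]
      exact h1.sub h2
    have key : ∀ u ∈ Icc (0:ℝ) 1,
        |deriv g u - ∑ k ∈ Finset.range n,
          u ^ k * iteratedDeriv k (deriv g) 0 / (k.factorial : ℝ)| ≤ M :=
      ih (deriv g) hg' M hM'
    have hmvt := (convex_Icc (0:ℝ) 1).norm_image_sub_le_of_norm_hasDerivWithin_le
      (f := r) (f' := fun u => deriv g u - ∑ k ∈ Finset.range n,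
        u ^ k * iteratedDeriv k (deriv g) 0 / (k.factorial : ℝ)) (C := M)
      (fun u hu => (hrd u).hasDerivWithinAt)
      (fun u hu => by simpa using key u hu)
      (left_mem_Icc.mpr zero_le_one) ht
    rw [hr0, sub_zero] at hmvt
    have hfin : |r t| ≤ M * |t| := by simpa [Real.norm_eq_abs] using hmvt
    calc |r t| ≤ M * |t| := hfin
      _ ≤ M * 1 := by
          apply mul_le_mul_of_nonneg_left _ hM0
          rw [abs_of_nonneg ht.1]; exact ht.2
      _ = M := mul_one M

set_option maxHeartbeats 2000000 in
/-- Expansion of the nlS-scaled potential energy of the Klein–Gordon chain: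
`𝕍(ε) = ε 𝕍₀ + ε² 𝕍₁ + ε³ 𝕍₂ + O(ε⁴)` with the explicit integrals `𝕍₀, 𝕍₁, 𝕍₂`.
Here `X = X(y, φ)` is smooth, `2π`-periodic in `φ` and compactly supported in `y`. -/
theorem nls_potential_energy_expansion
    (Φ₀ : ℝ → ℝ) (hΦ₀ : ContDiff ℝ (⊤ : ℕ∞) Φ₀)
    (hΦ₀0 : Φ₀ 0 = 0) (hΦ₀1 : deriv Φ₀ 0 = 0)
    (v₂ v₃ v₄ : ℝ) (hv₂ : v₂ = iteratedDeriv 2 Φ₀ 0) (hv₃ : v₃ = iteratedDeriv 3 Φ₀ 0)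
    (hv₄ : v₄ = iteratedDeriv 4 Φ₀ 0)
    (θ : ℝ)
    (X : ℝ × ℝ → ℝ) (hX : ContDiff ℝ (⊤ : ℕ∞) X)
    (hper : ∀ y φ : ℝ, X (y, φ + 2 * Real.pi) = X (y, φ))
    (hsupp : ∃ R : ℝ, ∀ y φ : ℝ, R < |y| → X (y, φ) = 0) :
    ∃ C > (0 : ℝ), ∃ ε₀ > (0 : ℝ), ∀ ε : ℝ, 0 < ε → ε < ε₀ →
      |ε⁻¹ * (∫ y : ℝ, ∫ φ in (0 : ℝ)..(2 * Real.pi),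
            (-(ε ^ 2 / 2) * X (y, φ)
                * (X (y + ε, φ + θ) + X (y - ε, φ - θ) - 2 * X (y, φ))
              + Φ₀ (ε * X (y, φ))))
          - ε * (∫ y : ℝ, ∫ φ in (0 : ℝ)..(2 * Real.pi),
            (-(1 / 2) * X (y, φ) * (X (y, φ + θ) + X (y, φ - θ) - 2 * X (y, φ))
              + (v₂ / 2) * X (y, φ) ^ 2))
          - ε ^ 2 * (∫ y : ℝ, ∫ φ in (0 : ℝ)..(2 * Real.pi),
            (-(1 / 2) * X (y, φ) * (pd (1, 0) X (y, φ + θ) - pd (1, 0) X (y, φ - θ))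
              + (v₃ / 6) * X (y, φ) ^ 3))
          - ε ^ 3 * (∫ y : ℝ, ∫ φ in (0 : ℝ)..(2 * Real.pi),
            (-(1 / 4) * X (y, φ)
                * (pd (1, 0) (pd (1, 0) X) (y, φ + θ)
                    + pd (1, 0) (pd (1, 0) X) (y, φ - θ))
              + (v₄ / 24) * X (y, φ) ^ 4))|
        ≤ C * ε ^ 4 := by
  obtain ⟨R, hR⟩ := hsupp
  have hXc : Continuous X := hX.continuous
  have hX1 : ContDiff ℝ (⊤ : ℕ∞) (pd (1, 0) X) := pd_contDiff hX
  have hX2 : ContDiff ℝ (⊤ : ℕ∞) (pd (1, 0) (pd (1, 0) X)) := pd_contDiff hX1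
  have hX1c : Continuous (pd (1, 0) X) := hX1.continuous
  have hX2c : Continuous (pd (1, 0) (pd (1, 0) X)) := hX2.continuous
  have hX3c : Continuous (pdn 3 X) := (pdn_contDiff 3 hX).continuous
  have hΦc : Continuous Φ₀ := hΦ₀.continuous
  have hπ : 0 < Real.pi := Real.pi_pos
  set R₀ : ℝ := |R| + 1 with hR₀def
  have hR₀pos : 0 < R₀ := by positivity
  set K : Set (ℝ × ℝ) :=
    Icc (-(R₀ + 1)) (R₀ + 1) ×ˢ Icc (-(|θ| + 1)) (2 * Real.pi + |θ| + 1) with hKdef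
  have hKc : IsCompact K := isCompact_Icc.prod isCompact_Icc
  obtain ⟨B₀', hB₀'⟩ := hKc.exists_bound_of_continuousOn hXc.continuousOn
  obtain ⟨B₃', hB₃'⟩ := hKc.exists_bound_of_continuousOn hX3c.continuousOn
  set B₀ : ℝ := max B₀' 0 with hB₀def
  set B₃ : ℝ := max B₃' 0 with hB₃def
  have hB₀nn : 0 ≤ B₀ := le_max_right _ _
  have hB₃nn : 0 ≤ B₃ := le_max_right _ _
  have hB₀ : ∀ p ∈ K, |X p| ≤ B₀ := fun p hp =>
    le_trans (by simpa [Real.norm_eq_abs] using hB₀' p hp) (le_max_left _ _)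
  have hB₃ : ∀ p ∈ K, |pdn 3 X p| ≤ B₃ := fun p hp =>
    le_trans (by simpa [Real.norm_eq_abs] using hB₃' p hp) (le_max_left _ _)
  have hΦ5c : Continuous (iteratedDeriv 5 Φ₀) := by
    rw [iteratedDeriv_eq_iterate]
    exact (ContDiff.iterate_deriv 5 hΦ₀).continuous
  obtain ⟨B₅', hB₅'⟩ :=
    (isCompact_Icc (a := -B₀) (b := B₀)).exists_bound_of_continuousOn hΦ5c.continuousOn
  set B₅ : ℝ := max B₅' 0 with hB₅def
  have hB₅nn : 0 ≤ B₅ := le_max_right _ _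
  have hB₅ : ∀ x ∈ Icc (-B₀) B₀, |iteratedDeriv 5 Φ₀ x| ≤ B₅ := fun x hx =>
    le_trans (by simpa [Real.norm_eq_abs] using hB₅' x hx) (le_max_left _ _)
  set K₁ : ℝ := B₀ * B₃ + B₀ ^ 5 * B₅ + 1 with hK₁def
  have hK₁pos : 0 < K₁ := by
    have h1 : 0 ≤ B₀ * B₃ := mul_nonneg hB₀nn hB₃nn
    have h2 : 0 ≤ B₀ ^ 5 * B₅ := mul_nonneg (pow_nonneg hB₀nn 5) hB₅nn
    rw [hK₁def]; linarith
  refine ⟨K₁ * (2 * Real.pi) * (2 * R₀) + 1, ?_, 1, one_pos, ?_⟩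
  · have h1 : 0 ≤ K₁ * (2 * Real.pi) * (2 * R₀) := by
      apply mul_nonneg (mul_nonneg hK₁pos.le (by positivity)) (by positivity)
    linarith
  intro ε hε hε1
  have hεne : ε ≠ 0 := ne_of_gt hε
  have hε4 : (0:ℝ) < ε ^ 4 := by positivity
  have hΦk : ∀ k : ℕ, ContDiff ℝ (k : ℕ∞) Φ₀ := fun k => hΦ₀.of_le (by exact_mod_cast le_top)
  -- pointwise bound
  have hpt : ∀ y φ : ℝ, φ ∈ Set.uIoc (0:ℝ) (2*Real.pi) →
      |ε⁻¹ * (-(ε ^ 2 / 2) * X (y, φ)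
                * (X (y + ε, φ + θ) + X (y - ε, φ - θ) - 2 * X (y, φ))
              + Φ₀ (ε * X (y, φ)))
        - ε * (-(1 / 2) * X (y, φ) * (X (y, φ + θ) + X (y, φ - θ) - 2 * X (y, φ))
              + (v₂ / 2) * X (y, φ) ^ 2)
        - ε ^ 2 * (-(1 / 2) * X (y, φ) * (pd (1, 0) X (y, φ + θ) - pd (1, 0) X (y, φ - θ))
              + (v₃ / 6) * X (y, φ) ^ 3)
        - ε ^ 3 * (-(1 / 4) * X (y, φ)
                * (pd (1, 0) (pd (1, 0) X) (y, φ + θ) + pd (1, 0) (pd (1, 0) X) (y, φ - θ))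
              + (v₄ / 24) * X (y, φ) ^ 4)| ≤ K₁ * ε ^ 4 := by
    intro y φ hφ
    rw [Set.uIoc_of_le (by positivity : (0:ℝ) ≤ 2*Real.pi)] at hφ
    obtain ⟨hφ0, hφ2⟩ := hφ
    by_cases hy : |y| ≤ R
    · -- main analytic case
      have hmemK : ∀ u ψ : ℝ, |u| ≤ 1 → (ψ = φ + θ ∨ ψ = φ - θ ∨ ψ = φ) → (y + u, ψ) ∈ K := by
        intro u ψ hu hψ
        have hyR : -|R| ≤ y ∧ y ≤ |R| := abs_le.mp (hy.trans (le_abs_self R))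
        have hu' : -1 ≤ u ∧ u ≤ 1 := abs_le.mp hu
        have hθ1 : -|θ| ≤ θ := neg_abs_le θ
        have hθ2 : θ ≤ |θ| := le_abs_self θ
        have hθ0 : 0 ≤ |θ| := abs_nonneg θ
        rw [hKdef]
        refine Set.mk_mem_prod (mem_Icc.mpr ⟨by linarith [hyR.1, hu'.1], by linarith [hyR.2, hu'.2]⟩) (mem_Icc.mpr ?_)
        rcases hψ with rfl | rfl | rfl
        · exact ⟨by linarith, by linarith⟩
        · exact ⟨by linarith, by linarith⟩
        · exact ⟨by linarith, by linarith⟩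
      have hyφK : ((y, φ) : ℝ × ℝ) ∈ K := by
        have := hmemK 0 φ (by norm_num) (Or.inr (Or.inr rfl))
        simpa using this
      have hXb : |X (y, φ)| ≤ B₀ := hB₀ _ hyφK
      -- Taylor for the + direction
      have hbndp : ∀ u ∈ Icc (0:ℝ) 1,
          |iteratedDeriv 3 (fun t : ℝ => X ((y, φ + θ) + t • ((ε, 0) : ℝ × ℝ))) u| ≤ ε ^ 3 * B₃ := by
        intro u hu
        rw [iteratedDeriv_line 3 X hX]
        have hq : ((y, φ + θ) : ℝ × ℝ) + u • ((ε, 0) : ℝ × ℝ) = (y + u * ε, φ + θ) := by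
          simp [Prod.smul_mk, Prod.mk_add_mk, smul_eq_mul]
        rw [hq, abs_mul, abs_pow, abs_of_pos hε]
        refine mul_le_mul_of_nonneg_left (hB₃ _ ?_) (by positivity)
        refine hmemK (u * ε) _ ?_ (Or.inl rfl)
        rw [abs_mul, abs_of_nonneg hu.1, abs_of_pos hε]
        nlinarith [hu.1, hu.2]
      have hsump : ∑ k ∈ Finset.range 3,
          (1:ℝ) ^ k * iteratedDeriv k (fun t : ℝ => X ((y, φ + θ) + t • ((ε, 0) : ℝ × ℝ))) 0
            / (k.factorial : ℝ)
          = X (y, φ + θ) + ε * pd (1, 0) X (y, φ + θ)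
            + ε ^ 2 * pd (1, 0) (pd (1, 0) X) (y, φ + θ) / 2 := by
        rw [Finset.sum_range_succ, Finset.sum_range_succ, Finset.sum_range_succ,
          Finset.sum_range_zero, iteratedDeriv_line 0 X hX, iteratedDeriv_line 1 X hX,
          iteratedDeriv_line 2 X hX]
        norm_num [pdn]
        try ring
      have hAp : |X (y + ε, φ + θ) - (X (y, φ + θ) + ε * pd (1, 0) X (y, φ + θ)
          + ε ^ 2 * pd (1, 0) (pd (1, 0) X) (y, φ + θ) / 2)| ≤ ε ^ 3 * B₃ := by
        have hline : ContDiff ℝ (⊤ : ℕ∞) (fun t : ℝ => X ((y, φ + θ) + t • ((ε, 0) : ℝ × ℝ))) :=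
          hX.comp (contDiff_const.add (contDiff_id.smul contDiff_const))
        have h := taylor_crude 3 _ hline (ε ^ 3 * B₃) hbndp 1 ⟨zero_le_one, le_refl 1⟩
        rw [hsump] at h
        have h1eq : ((y, φ + θ) : ℝ × ℝ) + (1:ℝ) • ((ε, 0) : ℝ × ℝ) = ((y + ε, φ + θ) : ℝ × ℝ) := by
          simp [Prod.smul_mk, Prod.mk_add_mk]
        rw [h1eq] at h
        exact h
      -- Taylor for the - direction
      have hbndm : ∀ u ∈ Icc (0:ℝ) 1,
          |iteratedDeriv 3 (fun t : ℝ => X ((y, φ - θ) + t • ((-ε, 0) : ℝ × ℝ))) u| ≤ ε ^ 3 * B₃ := by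
        intro u hu
        rw [iteratedDeriv_line 3 X hX]
        have hq : ((y, φ - θ) : ℝ × ℝ) + u • ((-ε, 0) : ℝ × ℝ) = (y + u * (-ε), φ - θ) := by
          simp [Prod.smul_mk, Prod.mk_add_mk, smul_eq_mul]
        rw [hq, abs_mul, abs_pow, abs_neg, abs_of_pos hε]
        refine mul_le_mul_of_nonneg_left (hB₃ _ ?_) (by positivity)
        refine hmemK (u * (-ε)) _ ?_ (Or.inr (Or.inl rfl))
        rw [abs_mul, abs_of_nonneg hu.1, abs_neg, abs_of_pos hε]
        nlinarith [hu.1, hu.2]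
      have hsumm : ∑ k ∈ Finset.range 3,
          (1:ℝ) ^ k * iteratedDeriv k (fun t : ℝ => X ((y, φ - θ) + t • ((-ε, 0) : ℝ × ℝ))) 0
            / (k.factorial : ℝ)
          = X (y, φ - θ) - ε * pd (1, 0) X (y, φ - θ)
            + ε ^ 2 * pd (1, 0) (pd (1, 0) X) (y, φ - θ) / 2 := by
        rw [Finset.sum_range_succ, Finset.sum_range_succ, Finset.sum_range_succ,
          Finset.sum_range_zero, iteratedDeriv_line 0 X hX, iteratedDeriv_line 1 X hX,
          iteratedDeriv_line 2 X hX]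
        norm_num [pdn]
        try ring
      have hAm : |X (y - ε, φ - θ) - (X (y, φ - θ) - ε * pd (1, 0) X (y, φ - θ)
          + ε ^ 2 * pd (1, 0) (pd (1, 0) X) (y, φ - θ) / 2)| ≤ ε ^ 3 * B₃ := by
        have hline : ContDiff ℝ (⊤ : ℕ∞) (fun t : ℝ => X ((y, φ - θ) + t • ((-ε, 0) : ℝ × ℝ))) :=
          hX.comp (contDiff_const.add (contDiff_id.smul contDiff_const))
        have h := taylor_crude 3 _ hline (ε ^ 3 * B₃) hbndm 1 ⟨zero_le_one, le_refl 1⟩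
        rw [hsumm] at h
        have h1eq : ((y, φ - θ) : ℝ × ℝ) + (1:ℝ) • ((-ε, 0) : ℝ × ℝ) = ((y - ε, φ - θ) : ℝ × ℝ) := by
          simp [Prod.smul_mk, Prod.mk_add_mk, sub_eq_add_neg]
        rw [h1eq] at h
        exact h
      -- Taylor for Φ₀
      have hcm : ∀ k : ℕ, ∀ u : ℝ, iteratedDeriv k (fun t : ℝ => Φ₀ (ε * X (y, φ) * t)) u
          = (ε * X (y, φ)) ^ k * iteratedDeriv k Φ₀ (ε * X (y, φ) * u) := by
        intro k u
        rw [iteratedDeriv_comp_const_smul (hΦk k) (ε * X (y, φ))]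
        simp [smul_eq_mul]
      have hsb : |ε * X (y, φ)| ≤ ε * B₀ := by
        rw [abs_mul, abs_of_pos hε]
        exact mul_le_mul_of_nonneg_left hXb hε.le
      have hΦbnd : ∀ u ∈ Icc (0:ℝ) 1,
          |iteratedDeriv 5 (fun t : ℝ => Φ₀ (ε * X (y, φ) * t)) u| ≤ (ε * B₀) ^ 5 * B₅ := by
        intro u hu
        rw [hcm 5 u, abs_mul, abs_pow]
        have hmem : ε * X (y, φ) * u ∈ Icc (-B₀) B₀ := by
          have h1 : |ε * X (y, φ) * u| ≤ B₀ := by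
            rw [abs_mul]
            have h2 : |ε * X (y, φ)| * |u| ≤ (ε * B₀) * 1 := by
              apply mul_le_mul hsb _ (abs_nonneg _) (by positivity)
              rw [abs_of_nonneg hu.1]; exact hu.2
            nlinarith [hu.1, hu.2, hB₀nn]
          exact abs_le.mp h1
        have h3 : |ε * X (y, φ)| ^ 5 ≤ (ε * B₀) ^ 5 :=
          pow_le_pow_left₀ (abs_nonneg _) hsb 5
        exact mul_le_mul h3 (hB₅ _ hmem) (abs_nonneg _) (by positivity)
      have hsumΦ : ∑ k ∈ Finset.range 5,
          (1:ℝ) ^ k * iteratedDeriv k (fun t : ℝ => Φ₀ (ε * X (y, φ) * t)) 0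
            / (k.factorial : ℝ)
          = v₂ / 2 * (ε * X (y, φ)) ^ 2 + v₃ / 6 * (ε * X (y, φ)) ^ 3
            + v₄ / 24 * (ε * X (y, φ)) ^ 4 := by
        rw [Finset.sum_range_succ, Finset.sum_range_succ, Finset.sum_range_succ,
          Finset.sum_range_succ, Finset.sum_range_succ, Finset.sum_range_zero,
          hcm 0 0, hcm 1 0, hcm 2 0, hcm 3 0, hcm 4 0]
        simp only [mul_zero, iteratedDeriv_zero, iteratedDeriv_one, hΦ₀0, hΦ₀1,
          ← hv₂, ← hv₃, ← hv₄]
        norm_num [Nat.factorial]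
        ring
      have hΦrem : |Φ₀ (ε * X (y, φ)) - (v₂ / 2 * (ε * X (y, φ)) ^ 2
          + v₃ / 6 * (ε * X (y, φ)) ^ 3 + v₄ / 24 * (ε * X (y, φ)) ^ 4)|
          ≤ (ε * B₀) ^ 5 * B₅ := by
        have hline : ContDiff ℝ (⊤ : ℕ∞) (fun t : ℝ => Φ₀ (ε * X (y, φ) * t)) :=
          hΦ₀.comp (contDiff_const.mul contDiff_id)
        have h := taylor_crude 5 _ hline ((ε * B₀) ^ 5 * B₅) hΦbnd 1 ⟨zero_le_one, le_refl 1⟩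
        rw [hsumΦ] at h
        simpa using h
      -- assemble
      have hid : ε⁻¹ * (-(ε ^ 2 / 2) * X (y, φ)
                * (X (y + ε, φ + θ) + X (y - ε, φ - θ) - 2 * X (y, φ))
              + Φ₀ (ε * X (y, φ)))
        - ε * (-(1 / 2) * X (y, φ) * (X (y, φ + θ) + X (y, φ - θ) - 2 * X (y, φ))
              + (v₂ / 2) * X (y, φ) ^ 2)
        - ε ^ 2 * (-(1 / 2) * X (y, φ) * (pd (1, 0) X (y, φ + θ) - pd (1, 0) X (y, φ - θ))
              + (v₃ / 6) * X (y, φ) ^ 3)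
        - ε ^ 3 * (-(1 / 4) * X (y, φ)
                * (pd (1, 0) (pd (1, 0) X) (y, φ + θ) + pd (1, 0) (pd (1, 0) X) (y, φ - θ))
              + (v₄ / 24) * X (y, φ) ^ 4)
        = -(ε / 2) * X (y, φ)
            * ((X (y + ε, φ + θ) - (X (y, φ + θ) + ε * pd (1, 0) X (y, φ + θ)
                + ε ^ 2 * pd (1, 0) (pd (1, 0) X) (y, φ + θ) / 2))
              + (X (y - ε, φ - θ) - (X (y, φ - θ) - ε * pd (1, 0) X (y, φ - θ)
                + ε ^ 2 * pd (1, 0) (pd (1, 0) X) (y, φ - θ) / 2)))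
          + ε⁻¹ * (Φ₀ (ε * X (y, φ)) - (v₂ / 2 * (ε * X (y, φ)) ^ 2
              + v₃ / 6 * (ε * X (y, φ)) ^ 3 + v₄ / 24 * (ε * X (y, φ)) ^ 4)) := by
        field_simp
        ring
      rw [hid]
      have habs1 : |(-(ε / 2) * X (y, φ))
          * ((X (y + ε, φ + θ) - (X (y, φ + θ) + ε * pd (1, 0) X (y, φ + θ)
              + ε ^ 2 * pd (1, 0) (pd (1, 0) X) (y, φ + θ) / 2))
            + (X (y - ε, φ - θ) - (X (y, φ - θ) - ε * pd (1, 0) X (y, φ - θ)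
              + ε ^ 2 * pd (1, 0) (pd (1, 0) X) (y, φ - θ) / 2)))|
          ≤ ε ^ 4 * (B₀ * B₃) := by
        rw [abs_mul, abs_mul, abs_neg, abs_of_pos (by positivity : (0:ℝ) < ε / 2)]
        have hS : |(X (y + ε, φ + θ) - (X (y, φ + θ) + ε * pd (1, 0) X (y, φ + θ)
              + ε ^ 2 * pd (1, 0) (pd (1, 0) X) (y, φ + θ) / 2))
            + (X (y - ε, φ - θ) - (X (y, φ - θ) - ε * pd (1, 0) X (y, φ - θ)
              + ε ^ 2 * pd (1, 0) (pd (1, 0) X) (y, φ - θ) / 2))|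
            ≤ 2 * (ε ^ 3 * B₃) := by
          calc |_ + _| ≤ _ := abs_add_le _ _
            _ ≤ 2 * (ε ^ 3 * B₃) := by linarith [hAp, hAm]
        have h2 : |X (y, φ)| * |(X (y + ε, φ + θ) - (X (y, φ + θ) + ε * pd (1, 0) X (y, φ + θ)
              + ε ^ 2 * pd (1, 0) (pd (1, 0) X) (y, φ + θ) / 2))
            + (X (y - ε, φ - θ) - (X (y, φ - θ) - ε * pd (1, 0) X (y, φ - θ)
              + ε ^ 2 * pd (1, 0) (pd (1, 0) X) (y, φ - θ) / 2))|
            ≤ B₀ * (2 * (ε ^ 3 * B₃)) :=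
          mul_le_mul hXb hS (abs_nonneg _) hB₀nn
        calc ε / 2 * |X (y, φ)| * |_| = ε / 2 * (|X (y, φ)| * |_|) := by ring
          _ ≤ ε / 2 * (B₀ * (2 * (ε ^ 3 * B₃))) := mul_le_mul_of_nonneg_left h2 (by positivity)
          _ = ε ^ 4 * (B₀ * B₃) := by ring
      have habs2 : |ε⁻¹ * (Φ₀ (ε * X (y, φ)) - (v₂ / 2 * (ε * X (y, φ)) ^ 2
            + v₃ / 6 * (ε * X (y, φ)) ^ 3 + v₄ / 24 * (ε * X (y, φ)) ^ 4))|
          ≤ ε ^ 4 * (B₀ ^ 5 * B₅) := by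
        rw [abs_mul, abs_of_pos (inv_pos.mpr hε)]
        calc ε⁻¹ * |_| ≤ ε⁻¹ * ((ε * B₀) ^ 5 * B₅) :=
              mul_le_mul_of_nonneg_left hΦrem (by positivity)
          _ = ε ^ 4 * (B₀ ^ 5 * B₅) := by field_simp
      calc |_ + _| ≤ _ := abs_add_le _ _
        _ ≤ ε ^ 4 * (B₀ * B₃) + ε ^ 4 * (B₀ ^ 5 * B₅) := add_le_add habs1 habs2
        _ ≤ K₁ * ε ^ 4 := by rw [hK₁def]; nlinarith [hε4.le]
    · -- zero case
      push_neg at hy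
      have h0 : ∀ ψ : ℝ, X (y, ψ) = 0 := fun ψ => hR y ψ hy
      have hz : ε⁻¹ * (-(ε ^ 2 / 2) * X (y, φ)
                * (X (y + ε, φ + θ) + X (y - ε, φ - θ) - 2 * X (y, φ))
              + Φ₀ (ε * X (y, φ)))
        - ε * (-(1 / 2) * X (y, φ) * (X (y, φ + θ) + X (y, φ - θ) - 2 * X (y, φ))
              + (v₂ / 2) * X (y, φ) ^ 2)
        - ε ^ 2 * (-(1 / 2) * X (y, φ) * (pd (1, 0) X (y, φ + θ) - pd (1, 0) X (y, φ - θ))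
              + (v₃ / 6) * X (y, φ) ^ 3)
        - ε ^ 3 * (-(1 / 4) * X (y, φ)
                * (pd (1, 0) (pd (1, 0) X) (y, φ + θ) + pd (1, 0) (pd (1, 0) X) (y, φ - θ))
              + (v₄ / 24) * X (y, φ) ^ 4) = 0 := by
        rw [h0 φ]
        norm_num [hΦ₀0]
      rw [hz, abs_zero]
      positivity
  -- plumbing: from the pointwise bound to the integral bound
  have main : ∀ q1 q2 q3 q4 : ℝ → ℝ → ℝ,
      Continuous (fun p : ℝ × ℝ => q1 p.1 p.2) →
      Continuous (fun p : ℝ × ℝ => q2 p.1 p.2) →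
      Continuous (fun p : ℝ × ℝ => q3 p.1 p.2) →
      Continuous (fun p : ℝ × ℝ => q4 p.1 p.2) →
      (∀ y φ : ℝ, R < |y| → q1 y φ = 0) →
      (∀ y φ : ℝ, R < |y| → q2 y φ = 0) →
      (∀ y φ : ℝ, R < |y| → q3 y φ = 0) →
      (∀ y φ : ℝ, R < |y| → q4 y φ = 0) →
      (∀ y φ : ℝ, φ ∈ Set.uIoc (0:ℝ) (2*Real.pi) →
        |ε⁻¹ * q1 y φ - ε * q2 y φ - ε ^ 2 * q3 y φ - ε ^ 3 * q4 y φ| ≤ K₁ * ε ^ 4) →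
      |ε⁻¹ * (∫ y : ℝ, ∫ φ in (0:ℝ)..(2*Real.pi), q1 y φ)
        - ε * (∫ y : ℝ, ∫ φ in (0:ℝ)..(2*Real.pi), q2 y φ)
        - ε ^ 2 * (∫ y : ℝ, ∫ φ in (0:ℝ)..(2*Real.pi), q3 y φ)
        - ε ^ 3 * (∫ y : ℝ, ∫ φ in (0:ℝ)..(2*Real.pi), q4 y φ)|
      ≤ (K₁ * ε ^ 4 * (2 * Real.pi)) * (2 * R₀) := by
    intro q1 q2 q3 q4 c1 c2 c3 c4 z1 z2 z3 z4 hptq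
    have cy : ∀ (q : ℝ → ℝ → ℝ), Continuous (fun p : ℝ × ℝ => q p.1 p.2) →
        ∀ y, Continuous (q y) := by
      intro q cq y
      have : (fun φ => q y φ) = (fun p : ℝ × ℝ => q p.1 p.2) ∘ (fun φ => (y, φ)) := rfl
      rw [show q y = fun φ => q y φ from rfl, this]
      exact cq.comp (continuous_const.prodMk continuous_id)
    have ii : ∀ (q : ℝ → ℝ → ℝ), Continuous (fun p : ℝ × ℝ => q p.1 p.2) →
        ∀ y, IntervalIntegrable (q y) volume 0 (2*Real.pi) := fun q cq y =>
      (cy q cq y).intervalIntegrable 0 (2*Real.pi)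
    have hJint : ∀ (q : ℝ → ℝ → ℝ), Continuous (fun p : ℝ × ℝ => q p.1 p.2) →
        (∀ y φ : ℝ, R < |y| → q y φ = 0) →
        Integrable (fun y => ∫ φ in (0:ℝ)..(2*Real.pi), q y φ) := by
      intro q cq zq
      apply Continuous.integrable_of_hasCompactSupport
      · exact intervalIntegral.continuous_parametric_intervalIntegral_of_continuous' cq 0 (2*Real.pi)
      · apply HasCompactSupport.intro (isCompact_Icc (a := -R₀) (b := R₀))
        intro y hy
        have hy' : R < |y| := by
          simp only [mem_Icc, not_and_or, not_le] at hy
          have hRR₀ : R < R₀ := by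
            rw [hR₀def]; have := le_abs_self R; linarith
          rcases hy with h | h
          · rcases abs_cases y with ⟨h1, h2⟩ | ⟨h1, h2⟩ <;> linarith
          · rcases abs_cases y with ⟨h1, h2⟩ | ⟨h1, h2⟩ <;> linarith
        have : (q y) = fun _ => (0:ℝ) := funext fun ψ => zq y ψ hy'
        rw [show (fun φ => q y φ) = q y from rfl, this]
        simp
    have hI1 := hJint q1 c1 z1
    have hI2 := hJint q2 c2 z2
    have hI3 := hJint q3 c3 z3
    have hI4 := hJint q4 c4 z4
    have hcomb : (∫ y : ℝ, (ε⁻¹ * (∫ φ in (0:ℝ)..(2*Real.pi), q1 y φ)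
          - ε * (∫ φ in (0:ℝ)..(2*Real.pi), q2 y φ)
          - ε ^ 2 * (∫ φ in (0:ℝ)..(2*Real.pi), q3 y φ)
          - ε ^ 3 * (∫ φ in (0:ℝ)..(2*Real.pi), q4 y φ)))
        = ε⁻¹ * (∫ y : ℝ, ∫ φ in (0:ℝ)..(2*Real.pi), q1 y φ)
          - ε * (∫ y : ℝ, ∫ φ in (0:ℝ)..(2*Real.pi), q2 y φ)
          - ε ^ 2 * (∫ y : ℝ, ∫ φ in (0:ℝ)..(2*Real.pi), q3 y φ)
          - ε ^ 3 * (∫ y : ℝ, ∫ φ in (0:ℝ)..(2*Real.pi), q4 y φ) := by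
      have hI12 : Integrable (fun y : ℝ => ε⁻¹ * (∫ φ in (0:ℝ)..(2*Real.pi), q1 y φ)
          - ε * (∫ φ in (0:ℝ)..(2*Real.pi), q2 y φ)) volume :=
        (hI1.const_mul ε⁻¹).sub (hI2.const_mul ε)
      have hI123 : Integrable (fun y : ℝ => ε⁻¹ * (∫ φ in (0:ℝ)..(2*Real.pi), q1 y φ)
          - ε * (∫ φ in (0:ℝ)..(2*Real.pi), q2 y φ)
          - ε ^ 2 * (∫ φ in (0:ℝ)..(2*Real.pi), q3 y φ)) volume :=
        hI12.sub (hI3.const_mul (ε ^ 2))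
      rw [integral_sub hI123 (hI4.const_mul (ε ^ 3)),
          integral_sub hI12 (hI3.const_mul (ε ^ 2)),
          integral_sub (hI1.const_mul ε⁻¹) (hI2.const_mul ε),
          integral_const_mul, integral_const_mul, integral_const_mul, integral_const_mul]
    rw [← hcomb]
    have hFb : ∀ y : ℝ, ‖ε⁻¹ * (∫ φ in (0:ℝ)..(2*Real.pi), q1 y φ)
          - ε * (∫ φ in (0:ℝ)..(2*Real.pi), q2 y φ)
          - ε ^ 2 * (∫ φ in (0:ℝ)..(2*Real.pi), q3 y φ)
          - ε ^ 3 * (∫ φ in (0:ℝ)..(2*Real.pi), q4 y φ)‖ ≤ K₁ * ε ^ 4 * (2 * Real.pi) := by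
      intro y
      rw [Real.norm_eq_abs]
      have hin : ε⁻¹ * (∫ φ in (0:ℝ)..(2*Real.pi), q1 y φ)
          - ε * (∫ φ in (0:ℝ)..(2*Real.pi), q2 y φ)
          - ε ^ 2 * (∫ φ in (0:ℝ)..(2*Real.pi), q3 y φ)
          - ε ^ 3 * (∫ φ in (0:ℝ)..(2*Real.pi), q4 y φ)
          = ∫ φ in (0:ℝ)..(2*Real.pi),
              (ε⁻¹ * q1 y φ - ε * q2 y φ - ε ^ 2 * q3 y φ - ε ^ 3 * q4 y φ) := by
        have k12 : IntervalIntegrable (fun φ => ε⁻¹ * q1 y φ - ε * q2 y φ)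
            volume 0 (2*Real.pi) :=
          ((ii q1 c1 y).const_mul ε⁻¹).sub ((ii q2 c2 y).const_mul ε)
        have k123 : IntervalIntegrable
            (fun φ => ε⁻¹ * q1 y φ - ε * q2 y φ - ε ^ 2 * q3 y φ) volume 0 (2*Real.pi) :=
          k12.sub ((ii q3 c3 y).const_mul (ε ^ 2))
        rw [intervalIntegral.integral_sub k123 ((ii q4 c4 y).const_mul (ε ^ 3)),
            intervalIntegral.integral_sub k12 ((ii q3 c3 y).const_mul (ε ^ 2)),
            intervalIntegral.integral_sub ((ii q1 c1 y).const_mul ε⁻¹)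
              ((ii q2 c2 y).const_mul ε),
            intervalIntegral.integral_const_mul, intervalIntegral.integral_const_mul,
            intervalIntegral.integral_const_mul, intervalIntegral.integral_const_mul]
      rw [hin]
      have h := intervalIntegral.norm_integral_le_of_norm_le_const
        (C := K₁ * ε ^ 4) (a := (0:ℝ)) (b := 2*Real.pi)
        (f := fun φ => ε⁻¹ * q1 y φ - ε * q2 y φ - ε ^ 2 * q3 y φ - ε ^ 3 * q4 y φ)
        (fun φ hφ => by rw [Real.norm_eq_abs]; exact hptq y φ hφ)
      rw [Real.norm_eq_abs] at h
      calc |∫ φ in (0:ℝ)..(2*Real.pi),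
            (ε⁻¹ * q1 y φ - ε * q2 y φ - ε ^ 2 * q3 y φ - ε ^ 3 * q4 y φ)|
          ≤ K₁ * ε ^ 4 * |2 * Real.pi - 0| := h
        _ = K₁ * ε ^ 4 * (2 * Real.pi) := by
            rw [sub_zero, abs_of_pos (by positivity)]
    have hF0 : ∀ y : ℝ, y ∉ Icc (-R₀) R₀ →
        ε⁻¹ * (∫ φ in (0:ℝ)..(2*Real.pi), q1 y φ)
          - ε * (∫ φ in (0:ℝ)..(2*Real.pi), q2 y φ)
          - ε ^ 2 * (∫ φ in (0:ℝ)..(2*Real.pi), q3 y φ)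
          - ε ^ 3 * (∫ φ in (0:ℝ)..(2*Real.pi), q4 y φ) = 0 := by
      intro y hy
      have hy' : R < |y| := by
        simp only [mem_Icc, not_and_or, not_le] at hy
        have hRR₀ : R < R₀ := by
          rw [hR₀def]; have := le_abs_self R; linarith
        rcases hy with h | h
        · rcases abs_cases y with ⟨h1, h2⟩ | ⟨h1, h2⟩ <;> linarith
        · rcases abs_cases y with ⟨h1, h2⟩ | ⟨h1, h2⟩ <;> linarith
      have e1 : (fun φ => q1 y φ) = fun _ => (0:ℝ) := funext fun ψ => z1 y ψ hy'
      have e2 : (fun φ => q2 y φ) = fun _ => (0:ℝ) := funext fun ψ => z2 y ψ hy'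
      have e3 : (fun φ => q3 y φ) = fun _ => (0:ℝ) := funext fun ψ => z3 y ψ hy'
      have e4 : (fun φ => q4 y φ) = fun _ => (0:ℝ) := funext fun ψ => z4 y ψ hy'
      rw [intervalIntegral.integral_congr (g := fun _ => (0:ℝ)) (fun ψ _ => z1 y ψ hy'),
          intervalIntegral.integral_congr (g := fun _ => (0:ℝ)) (fun ψ _ => z2 y ψ hy'),
          intervalIntegral.integral_congr (g := fun _ => (0:ℝ)) (fun ψ _ => z3 y ψ hy'),
          intervalIntegral.integral_congr (g := fun _ => (0:ℝ)) (fun ψ _ => z4 y ψ hy')]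
      try simp
    rw [← setIntegral_eq_integral_of_forall_compl_eq_zero hF0]
    have hmlt : volume (Icc (-R₀) R₀) < ⊤ := by
      rw [Real.volume_Icc]; exact ENNReal.ofReal_lt_top
    have hb := norm_setIntegral_le_of_norm_le_const (μ := volume) (s := Icc (-R₀) R₀)
      hmlt (fun y _ => hFb y)
    rw [Real.norm_eq_abs] at hb
    calc |∫ y in Icc (-R₀) R₀, (ε⁻¹ * (∫ φ in (0:ℝ)..(2*Real.pi), q1 y φ)
          - ε * (∫ φ in (0:ℝ)..(2*Real.pi), q2 y φ)
          - ε ^ 2 * (∫ φ in (0:ℝ)..(2*Real.pi), q3 y φ)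
          - ε ^ 3 * (∫ φ in (0:ℝ)..(2*Real.pi), q4 y φ))|
        ≤ K₁ * ε ^ 4 * (2 * Real.pi) * (volume (Icc (-R₀) R₀)).toReal := hb
      _ = (K₁ * ε ^ 4 * (2 * Real.pi)) * (2 * R₀) := by
          rw [Real.volume_Icc, ENNReal.toReal_ofReal (by linarith)]
          ring
  refine le_trans (main _ _ _ _ ?_ ?_ ?_ ?_ ?_ ?_ ?_ ?_ hpt) ?_
  · fun_prop
  · fun_prop
  · fun_prop
  · fun_prop
  · intro y φ h
    have h0 : ∀ ψ : ℝ, X (y, ψ) = 0 := fun ψ => hR y ψ h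
    norm_num [h0, hΦ₀0]
  · intro y φ h
    have h0 : ∀ ψ : ℝ, X (y, ψ) = 0 := fun ψ => hR y ψ h
    norm_num [h0]
  · intro y φ h
    have h0 : ∀ ψ : ℝ, X (y, ψ) = 0 := fun ψ => hR y ψ h
    norm_num [h0]
  · intro y φ h
    have h0 : ∀ ψ : ℝ, X (y, ψ) = 0 := fun ψ => hR y ψ h
    norm_num [h0]
  · nlinarith [hε4.le, mul_nonneg (mul_nonneg hK₁pos.le (by positivity : (0:ℝ) ≤ 2*Real.pi)) hε4.le]
end

section
/- Let θ, ω ∈ ℝ and v₂ > 0 satisfy the dispersion relation ω² = v₂ + 2(1 − cos θ), and assume the non-resonance condition: for every m ∈ ℤ with |m| ≥ 2, m² ω² ≠ v₂ + 2(1 − cos(mθ)). Let X : ℝ × ℝ → ℝ be C² and 2π-periodic in its second argument φ, and suppose ω² ∂_{φφ}X(y,φ) = X(y, φ+θ) + X(y, φ−θ) − 2X(y,φ) − v₂ X(y,φ) for all (y,φ) ∈ ℝ². Then there exist functions B₁, B₂ : ℝ → ℝ such that X(y,φ) = π^{−1/2} ( B₁(y) cos φ + B₂(y) sin φ ) for all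 (y,φ); i.e. every solution of the leading-order equation is a modulated first harmonic. -/
open Complex Real intervalIntegral Function Set

lemma aux_harmonic (θ ω v₂ : ℝ) (hv₂ : 0 < v₂)
    (hdisp : ω ^ 2 = v₂ + 2 * (1 - Real.cos θ))
    (hnr : ∀ m : ℤ, 2 ≤ |m| →
      (m : ℝ) ^ 2 * ω ^ 2 ≠ v₂ + 2 * (1 - Real.cos ((m : ℝ) * θ)))
    (g : ℝ → ℝ) (hg : ContDiff ℝ 2 g) (hper : Function.Periodic g (2 * Real.pi))
    (heq : ∀ φ, ω ^ 2 * deriv (deriv g) φ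
      = g (φ + θ) + g (φ - θ) - 2 * g φ - v₂ * g φ) :
    ∃ a b : ℝ, ∀ φ, g φ = a * Real.cos φ + b * Real.sin φ := by
  haveI hT : Fact (0 < 2 * π) := ⟨by positivity⟩
  -- differentiability facts
  obtain ⟨hdg, hdg', hcg''⟩ :
      Differentiable ℝ g ∧ Differentiable ℝ (deriv g) ∧ Continuous (deriv (deriv g)) := by
    have h : ContDiff ℝ ((1:ℕ∞)+1) g := by norm_num; exact hg
    rw [contDiff_succ_iff_deriv] at h
    have h2 : ContDiff ℝ ((0:ℕ∞)+1) (deriv g) := by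
      have := h.2.2; norm_num at this ⊢; exact this
    rw [contDiff_succ_iff_deriv] at h2
    exact ⟨h.1, h2.1, h2.2.2.continuous⟩
  set g' := deriv g with hg'def
  set g'' := deriv g' with hg''def
  -- periodicity of derivatives
  have hper' : Function.Periodic g' (2 * π) := fun x => by
    have h1 : (fun y => g (y + 2 * π)) = g := funext hper
    rw [hg'def, ← deriv_comp_add_const, h1]
  have hper'' : Function.Periodic g'' (2 * π) := fun x => by
    have h1 : (fun y => g' (y + 2 * π)) = g' := funext hper'
    rw [hg''def, ← deriv_comp_add_const, h1]
  -- complexifications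
  set fc : ℝ → ℂ := fun x => (g x : ℂ) with hfc
  set fc' : ℝ → ℂ := fun x => (g' x : ℂ) with hfc'
  set fc'' : ℝ → ℂ := fun x => (g'' x : ℂ) with hfc''
  have hcfc : Continuous fc := Complex.continuous_ofReal.comp hdg.continuous
  have hcfc' : Continuous fc' := Complex.continuous_ofReal.comp hdg'.continuous
  have hcfc'' : Continuous fc'' := Complex.continuous_ofReal.comp hcg''
  have hDfc : ∀ x, HasDerivAt fc (fc' x) x := fun x => ((hdg x).hasDerivAt).ofReal_comp
  have hDfc' : ∀ x, HasDerivAt fc' (fc'' x) x := fun x => ((hdg' x).hasDerivAt).ofReal_comp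
  have hperfc : Function.Periodic fc (2 * π) := fun x => by simp [hfc, hper x]
  -- the exponentials
  set e : ℤ → ℝ → ℂ := fun n x => Complex.exp (-(n:ℂ) * x * I) with he
  have hce : ∀ n, Continuous (e n) := fun n => by
    apply Complex.continuous_exp.comp; continuity
  have hDe : ∀ (n : ℤ) (x : ℝ),
      HasDerivAt (e n) (-(n:ℂ) * I * e n x) x := by
    intro n x
    have h1 : HasDerivAt (fun t : ℝ => -(n:ℂ) * t * I) (-(n:ℂ) * I) x := by
      have h0 : HasDerivAt (fun t : ℝ => (t:ℂ)) 1 x := (hasDerivAt_id x).ofReal_comp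
      have := (h0.const_mul (-(n:ℂ))).mul_const I
      simpa [mul_comm, mul_assoc, mul_left_comm] using this
    simpa [he, mul_comm] using h1.cexp
  have hepr : ∀ n : ℤ, Function.Periodic (e n) (2 * π) := by
    intro n x
    have : -(n:ℂ) * (↑(x + 2*π)) * I = -(n:ℂ) * x * I + (-n : ℤ) * (2 * π * I) := by
      push_cast; ring
    rw [he]
    simp only [this, Complex.exp_add, Complex.exp_int_mul_two_pi_mul_I, mul_one]
  have he2pi : ∀ n : ℤ, e n (2 * π) = 1 := by
    intro n
    have := (hepr n 0)
    simpa [he] using this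
  -- the Fourier integrals
  set J : ℤ → ℂ := fun n => ∫ x in (0:ℝ)..2*π, e n x * fc x with hJ
  -- integration by parts
  have parts : ∀ (n : ℤ) (c d : ℝ → ℂ), (∀ x, HasDerivAt c (d x) x) → Continuous d →
      c (2*π) = c 0 →
      (∫ x in (0:ℝ)..2*π, e n x * d x) = (n:ℂ) * I * ∫ x in (0:ℝ)..2*π, e n x * c x := by
    intro n c d hcd hd hcper
    have hcc : Continuous c := by
      exact continuous_iff_continuousAt.2 fun x => (hcd x).continuousAt
    have hb := integral_mul_deriv_eq_deriv_mul_of_hasDerivAt (a := (0:ℝ)) (b := 2*π)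
      (u := e n) (v := c) (u' := fun x => -(n:ℂ) * I * e n x) (v' := d)
      ((hce n).continuousOn) (hcc.continuousOn)
      (fun x _ => hDe n x) (fun x _ => hcd x)
      (((continuous_const.mul (hce n))).intervalIntegrable _ _)
      (hd.intervalIntegrable _ _)
    rw [hb, he2pi n, hcper]
    have : (∫ x in (0:ℝ)..2*π, -(n:ℂ) * I * e n x * c x)
        = -(n:ℂ) * I * ∫ x in (0:ℝ)..2*π, e n x * c x := by
      rw [← intervalIntegral.integral_const_mul]
      congr 1; ext x; ring
    rw [this]
    simp [he]
  -- second derivative coefficient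
  have hJ2 : ∀ n : ℤ, (∫ x in (0:ℝ)..2*π, e n x * fc'' x) = -(n:ℂ)^2 * J n := by
    intro n
    rw [parts n fc' fc'' hDfc' hcfc'' (by simpa [hfc'] using congrArg Complex.ofReal (by simpa using hper' 0)),
      parts n fc fc' hDfc hcfc' (by simpa [hfc] using congrArg Complex.ofReal (by simpa using hper 0))]
    rw [show (∫ x in (0:ℝ)..2*π, e n x * fc x) = J n from rfl]
    ring_nf
    rw [Complex.I_sq]; ring
  -- shifted coefficients
  have hshift : ∀ (n : ℤ) (s : ℝ),
      (∫ x in (0:ℝ)..2*π, e n x * fc (x + s)) = Complex.exp ((n:ℂ) * s * I) * J n := by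
    intro n s
    have hpint : Function.Periodic (fun u => e n u * fc u) (2 * π) := fun x => by
      show e n (x + 2*π) * fc (x + 2*π) = e n x * fc x
      rw [hepr n x, hperfc x]
    have step1 : (∫ x in (0:ℝ)..2*π, e n x * fc (x + s))
        = ∫ x in (0:ℝ)..2*π, Complex.exp ((n:ℂ) * s * I) * ((fun u => e n u * fc u) (x + s)) := by
      apply intervalIntegral.integral_congr
      intro x _
      show e n x * fc (x + s) = _
      have : Complex.exp ((n:ℂ) * s * I) * e n (x + s) = e n x := by
        rw [he]
        show Complex.exp _ * Complex.exp _ = Complex.exp _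
        rw [← Complex.exp_add]
        congr 1
        push_cast
        ring
      simp only []
      rw [← this]
      ring
    rw [step1, intervalIntegral.integral_const_mul]
    congr 1
    rw [intervalIntegral.integral_comp_add_right (fun u => e n u * fc u) s]
    have h0 : (0:ℝ) + s = s := by ring
    have h1 : 2*π + s = s + 2*π := by ring
    rw [h0, h1, hpint.intervalIntegral_add_eq s 0]
    simp [hJ]
  -- the key coefficient identity
  have key : ∀ n : ℤ, ((v₂:ℂ) + 2 * (1 - Complex.cos ((n:ℂ) * θ)) - (n:ℂ)^2 * (ω:ℂ)^2) * J n = 0 := by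
    intro n
    have heqC : ∀ φ : ℝ, (ω:ℂ)^2 * fc'' φ = fc (φ + θ) + fc (φ - θ) - 2 * fc φ - v₂ * fc φ := by
      intro φ
      have := congrArg (Complex.ofReal) (heq φ)
      push_cast at this ⊢
      simpa [hfc, hfc''] using this
    have hint : (∫ x in (0:ℝ)..2*π, e n x * ((ω:ℂ)^2 * fc'' x))
        = ∫ x in (0:ℝ)..2*π, e n x * (fc (x + θ) + fc (x - θ) - 2 * fc x - v₂ * fc x) := by
      apply intervalIntegral.integral_congr
      intro x _
      dsimp only
      rw [heqC x]
    have hL : (∫ x in (0:ℝ)..2*π, e n x * ((ω:ℂ)^2 * fc'' x)) = (ω:ℂ)^2 * (-(n:ℂ)^2 * J n) := by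
      rw [← hJ2 n, ← intervalIntegral.integral_const_mul]
      congr 1; ext x; ring
    have hR : (∫ x in (0:ℝ)..2*π, e n x * (fc (x + θ) + fc (x - θ) - 2 * fc x - v₂ * fc x))
        = Complex.exp ((n:ℂ) * θ * I) * J n + Complex.exp (-((n:ℂ) * θ * I)) * J n
          - 2 * J n - v₂ * J n := by
      have i1 : IntervalIntegrable (fun x => e n x * fc (x + θ)) MeasureTheory.volume 0 (2*π) :=
        ((hce n).mul (hcfc.comp (continuous_add_right θ))).intervalIntegrable _ _
      have i2 : IntervalIntegrable (fun x => e n x * fc (x - θ)) MeasureTheory.volume 0 (2*π) :=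
        ((hce n).mul (hcfc.comp (continuous_sub_right θ))).intervalIntegrable _ _
      have i3 : IntervalIntegrable (fun x => (2:ℂ) * (e n x * fc x)) MeasureTheory.volume 0 (2*π) :=
        (continuous_const.mul ((hce n).mul hcfc)).intervalIntegrable _ _
      have i4 : IntervalIntegrable (fun x => (v₂:ℂ) * (e n x * fc x)) MeasureTheory.volume 0 (2*π) :=
        (continuous_const.mul ((hce n).mul hcfc)).intervalIntegrable _ _
      have expand : (fun x => e n x * (fc (x + θ) + fc (x - θ) - 2 * fc x - v₂ * fc x))
          = fun x => (e n x * fc (x + θ) + e n x * fc (x - θ)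
            - (2:ℂ) * (e n x * fc x)) - (v₂:ℂ) * (e n x * fc x) := by
        ext x; ring
      rw [expand, intervalIntegral.integral_sub (((i1.add i2).sub i3)) i4,
        intervalIntegral.integral_sub (i1.add i2) i3,
        intervalIntegral.integral_add i1 i2,
        intervalIntegral.integral_const_mul, intervalIntegral.integral_const_mul]
      have hsub : (∫ x in (0:ℝ)..2*π, e n x * fc (x - θ))
          = Complex.exp ((n:ℂ) * (-θ) * I) * J n := by
        have := hshift n (-θ)
        simpa [sub_eq_add_neg] using this
      rw [hshift n θ, hsub, show (∫ x in (0:ℝ)..2*π, e n x * fc x) = J n from rfl]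
      push_cast
      ring_nf
    have hcos : Complex.exp ((n:ℂ) * θ * I) + Complex.exp (-((n:ℂ) * θ * I))
        = 2 * Complex.cos ((n:ℂ) * θ) := by
      rw [Complex.cos]
      ring_nf
    have := hint
    rw [hL, hR] at this
    have h2 : (ω:ℂ)^2 * (-(n:ℂ)^2 * J n)
        = 2 * Complex.cos ((n:ℂ) * θ) * J n - 2 * J n - v₂ * J n := by
      rw [this]; rw [← hcos]; ring
    linear_combination h2
  -- J n vanishes away from ±1
  have hJ0 : ∀ n : ℤ, n ≠ 1 → n ≠ -1 → J n = 0 := by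
    intro n h1 hm1
    have hfac : ((v₂:ℂ) + 2 * (1 - Complex.cos ((n:ℂ) * θ)) - (n:ℂ)^2 * (ω:ℂ)^2) ≠ 0 := by
      have hre : ((v₂:ℂ) + 2 * (1 - Complex.cos ((n:ℂ) * θ)) - (n:ℂ)^2 * (ω:ℂ)^2)
          = ((v₂ + 2 * (1 - Real.cos ((n:ℝ) * θ)) - (n:ℝ)^2 * ω^2 : ℝ) : ℂ) := by
        push_cast
        ring
      rw [hre, Complex.ofReal_ne_zero]
      rcases eq_or_ne n 0 with rfl | hn0
      · simp only [Int.cast_zero, zero_mul, Real.cos_zero]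
        norm_num
        exact hv₂.ne'
      · have habs : 2 ≤ |n| := by
          rcases le_or_gt 0 n with h | h
          · rw [abs_of_nonneg h]; omega
          · rw [abs_of_neg h]; omega
        have := hnr n habs
        intro hcontra
        apply this
        push_cast at hcontra ⊢
        linarith
    have := key n
    exact (mul_eq_zero.1 this).resolve_left hfac
  -- lift to the circle
  set F : C(AddCircle (2 * π), ℂ) :=
    ⟨hperfc.lift, hcfc.quotient_liftOn' (fun a b h => by
      have h' : -a + b ∈ AddSubgroup.zmultiples (2 * π) := by
        rwa [QuotientAddGroup.leftRel_apply] at h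
      obtain ⟨k, hk⟩ := h'
      calc fc a = fc (a + k • (2*π)) := ((hperfc.zsmul k a)).symm
        _ = fc b := by
            congr 1
            have hk' : k • (2*π) = -a + b := hk
            rw [hk']; ring)⟩ with hF
  have hFcoe : ∀ x : ℝ, F (x : AddCircle (2*π)) = fc x := fun x => rfl
  -- Fourier coefficients of F
  have hcoeff : ∀ n : ℤ, fourierCoeff (F : AddCircle (2*π) → ℂ) n = (1 / (2*π : ℝ) : ℂ) * J n := by
    intro n
    rw [fourierCoeff_eq_intervalIntegral (F : AddCircle (2*π) → ℂ) n 0]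
    rw [zero_add]
    have : ∀ x : ℝ, fourier (-n) (x : AddCircle (2*π)) • F (x : AddCircle (2*π)) = e n x * fc x := by
      intro x
      rw [hFcoe, smul_eq_mul]
      congr 1
      rw [fourier_coe_apply, he]
      congr 1
      push_cast
      have h2pi : (2*π : ℂ) ≠ 0 := by
        simp [Real.pi_ne_zero]
      field_simp
    simp_rw [this]
    rw [real_smul]
    norm_num
    rfl
  have hvanish : ∀ n : ℤ, n ≠ 1 → n ≠ -1 → fourierCoeff (F : AddCircle (2*π) → ℂ) n = 0 := by
    intro n h1 hm1
    rw [hcoeff n, hJ0 n h1 hm1, mul_zero]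
  -- summability (finite support)
  have hsumm : Summable (fourierCoeff (F : AddCircle (2*π) → ℂ)) := by
    apply summable_of_ne_finset_zero (s := ({1, -1} : Finset ℤ))
    intro n hn
    simp only [Finset.mem_insert, Finset.mem_singleton] at hn
    push_neg at hn
    exact hvanish n hn.1 hn.2
  -- pointwise representation
  have hrep : ∀ φ : ℝ, fc φ
      = fourierCoeff (F : AddCircle (2*π) → ℂ) 1 * Complex.exp ((φ:ℂ) * I)
        + fourierCoeff (F : AddCircle (2*π) → ℂ) (-1) * Complex.exp (-(φ:ℂ) * I) := by
    intro φ
    have h1 := has_pointwise_sum_fourier_series_of_summable hsumm (φ : AddCircle (2*π))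
    have h2 : HasSum (fun i => fourierCoeff (F : AddCircle (2*π) → ℂ) i • fourier i (φ : AddCircle (2*π)))
        (∑ i ∈ ({1, -1} : Finset ℤ),
          fourierCoeff (F : AddCircle (2*π) → ℂ) i • fourier i (φ : AddCircle (2*π))) := by
      apply hasSum_sum_of_ne_finset_zero
      intro n hn
      simp only [Finset.mem_insert, Finset.mem_singleton] at hn
      push_neg at hn
      rw [hvanish n hn.1 hn.2, zero_smul]
    have h3 := h1.unique h2
    rw [hFcoe] at h3
    rw [h3]
    have hfour : ∀ m : ℤ, (fourier m (φ : AddCircle (2*π)) : ℂ) = Complex.exp ((m:ℂ) * φ * I) := by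
      intro m
      rw [fourier_coe_apply]
      congr 1
      have h2pi : (2*π : ℂ) ≠ 0 := by simp [Real.pi_ne_zero]
      push_cast
      field_simp
    rw [Finset.sum_insert (by decide), Finset.sum_singleton]
    rw [smul_eq_mul, smul_eq_mul, hfour 1, hfour (-1)]
    push_cast
    ring_nf
  -- extract real and imaginary parts
  set c1 := fourierCoeff (F : AddCircle (2*π) → ℂ) 1 with hc1
  set cm1 := fourierCoeff (F : AddCircle (2*π) → ℂ) (-1) with hcm1
  refine ⟨c1.re + cm1.re, cm1.im - c1.im, fun φ => ?_⟩
  have h4 := congrArg Complex.re (hrep φ)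
  have hre : (fc φ).re = g φ := by simp [hfc]
  rw [hre] at h4
  rw [h4]
  have hexp1 : Complex.exp ((φ:ℂ) * I) = Complex.cos φ + Complex.sin φ * I := Complex.exp_mul_I _
  have hexp2 : Complex.exp (-(φ:ℂ) * I) = Complex.cos φ - Complex.sin φ * I := by
    rw [Complex.exp_mul_I, Complex.cos_neg, Complex.sin_neg]
    ring
  rw [hexp1, hexp2]
  rw [← Complex.ofReal_cos, ← Complex.ofReal_sin]
  simp [Complex.add_re, Complex.mul_re, Complex.mul_im, Complex.ofReal_re, Complex.ofReal_im,
    Complex.cos_ofReal_re, Complex.sin_ofReal_re]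
  ring

/-- Under the dispersion relation `ω² = v₂ + 2(1 − cos θ)` and the non-resonance condition
`m²ω² ≠ v₂ + 2(1 − cos(mθ))` for `|m| ≥ 2`, every `2π`-periodic (in `φ`) `C²` solution of
the leading-order equation `ω² X_φφ = Δ_{0,θ}X − v₂X` is a modulated first harmonic:
`X(y,φ) = π^{-1/2}(B₁(y)cos φ + B₂(y)sin φ)`. -/
theorem leading_order_solutions_are_modulated_first_harmonics
    (θ ω v₂ : ℝ) (hv₂ : 0 < v₂)
    (hdisp : ω ^ 2 = v₂ + 2 * (1 - Real.cos θ))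
    (hnr : ∀ m : ℤ, 2 ≤ |m| →
      (m : ℝ) ^ 2 * ω ^ 2 ≠ v₂ + 2 * (1 - Real.cos ((m : ℝ) * θ)))
    (X : ℝ × ℝ → ℝ) (hX : ContDiff ℝ 2 X)
    (hper : ∀ y φ : ℝ, X (y, φ + 2 * Real.pi) = X (y, φ))
    (heq : ∀ y φ : ℝ,
      ω ^ 2 * deriv (deriv (fun ψ => X (y, ψ))) φ
        = X (y, φ + θ) + X (y, φ - θ) - 2 * X (y, φ) - v₂ * X (y, φ)) :
    ∃ B₁ B₂ : ℝ → ℝ, ∀ y φ : ℝ,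
      X (y, φ) = (Real.sqrt Real.pi)⁻¹ * (B₁ y * Real.cos φ + B₂ y * Real.sin φ) := by
  have hmain : ∀ y : ℝ, ∃ a b : ℝ, ∀ φ, X (y, φ) = a * Real.cos φ + b * Real.sin φ := by
    intro y
    have hg : ContDiff ℝ 2 (fun ψ => X (y, ψ)) :=
      hX.comp (contDiff_const.prodMk contDiff_id)
    exact aux_harmonic θ ω v₂ hv₂ hdisp hnr _ hg (fun φ => hper y φ) (heq y)
  choose a b hab using hmain
  refine ⟨fun y => Real.sqrt Real.pi * a y, fun y => Real.sqrt Real.pi * b y, fun y φ => ?_⟩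
  have hs : Real.sqrt Real.pi ≠ 0 := by
    have := Real.sqrt_pos.mpr Real.pi_pos
    exact this.ne'
  rw [hab y φ]
  field_simp
end

section
/- Let B₁, B₂ ∈ C_c^∞(ℝ), θ, ω, c, v₃ ∈ ℝ, and define X₀(y,φ) = π^{−1/2} ( B₁(y) cos φ + B₂(y) sin φ ). Then: (a) ∫_ℝ ∫_0^{2π} ∂_yX₀(y,φ) ∂_φX₀(y,φ) dφ dy = 2 ∫_ℝ B₁'(y) B₂(y) dy; (b) −½ ∫_ℝ ∫_0^{2π} X₀(y,φ) ( ∂_yX₀(y, φ+θ) − ∂_yX₀(y, φ−θ) ) dφ dy + (v₃/6) ∫_ℝ ∫_0^{2π} X₀(y,φ)³ dφ dy = 2 sin θ ∫_ℝ B₁'(y) B₂(y) dy. Consequently, setting 𝕂₁(X₀) = −ωc ∫∫ ∂_yX₀ ∂_φX₀ dφ dy and 𝕍₁(X₀) equal to the left-hand side of (b), if cω = −sin θ then 𝕂₁(X₀) − 𝕍₁(X₀) = 0; i.e. the next-to-leading-order Lagrangian vanishes on the leading-order solution manifold exactly when the frame moves with the group velocity. -/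
/-- The leading-order modulated first harmonic `X₀(y,φ) = π^{-1/2}(B₁(y)cos φ + B₂(y)sin φ)`. -/
noncomputable def X0 (B₁ B₂ : ℝ → ℝ) (p : ℝ × ℝ) : ℝ :=
  (Real.sqrt Real.pi)⁻¹ * (B₁ p.1 * Real.cos p.2 + B₂ p.1 * Real.sin p.2)

/-- `∫₀^{2π} (A sin cos + B cos² + C sin²) = π(B+C)`. -/
lemma itrig (A B C : ℝ) :
    ∫ φ in (0:ℝ)..(2*Real.pi),
      (A * (Real.sin φ * Real.cos φ) + B * Real.cos φ^2 + C * Real.sin φ^2)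
      = Real.pi * (B + C) := by
  have key : ∀ φ : ℝ, HasDerivAt
      (fun x => A * (Real.sin x ^2 / 2) + B * (x/2 + Real.sin x * Real.cos x / 2)
        + C * (x/2 - Real.sin x * Real.cos x / 2))
      (A * (Real.sin φ * Real.cos φ) + B * Real.cos φ^2 + C * Real.sin φ^2) φ := by
    intro φ
    have hs := Real.hasDerivAt_sin φ
    have hc := Real.hasDerivAt_cos φ
    have h1 : HasDerivAt (fun x => Real.sin x ^ 2 / 2) (Real.sin φ * Real.cos φ) φ := by
      have := (hs.pow 2).div_const 2
      refine this.congr_deriv ?_; norm_num; ring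
    have h2 : HasDerivAt (fun x => Real.sin x * Real.cos x / 2)
        ((Real.cos φ * Real.cos φ + Real.sin φ * (-Real.sin φ)) / 2) φ :=
      (hs.mul hc).div_const 2
    have hid : HasDerivAt (fun x : ℝ => x / 2) (1/2 : ℝ) φ := by
      simpa using (hasDerivAt_id φ).div_const 2
    have := ((h1.const_mul A).add ((hid.add h2).const_mul B)).add
      ((hid.sub h2).const_mul C)
    refine this.congr_deriv ?_
    have hpy := Real.sin_sq_add_cos_sq φ
    linear_combination (-(B+C)/2) * hpy
  rw [intervalIntegral.integral_eq_sub_of_hasDerivAt (fun φ _ => key φ) (by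
    apply Continuous.intervalIntegrable; continuity)]
  simp [Real.sin_two_pi, Real.cos_two_pi]
  ring

/-- `∫₀^{2π} (a cos + b sin)³ = 0`. -/
lemma icube (a b : ℝ) :
    ∫ φ in (0:ℝ)..(2*Real.pi), (a * Real.cos φ + b * Real.sin φ)^3 = 0 := by
  have key : ∀ φ : ℝ, HasDerivAt
      (fun x => a^3 * (Real.sin x - Real.sin x ^3/3) + 3*a^2*b * (-(Real.cos x ^3)/3)
        + 3*a*b^2 * (Real.sin x ^3/3) + b^3 * (-Real.cos x + Real.cos x ^3/3))
      ((a * Real.cos φ + b * Real.sin φ)^3) φ := by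
    intro φ
    have hs := Real.hasDerivAt_sin φ
    have hc := Real.hasDerivAt_cos φ
    have hs3 : HasDerivAt (fun x => Real.sin x ^ 3 / 3) (Real.sin φ ^2 * Real.cos φ) φ := by
      have := (hs.pow 3).div_const 3
      refine this.congr_deriv ?_; norm_num; ring
    have hc3 : HasDerivAt (fun x => Real.cos x ^ 3 / 3) (-(Real.cos φ ^2 * Real.sin φ)) φ := by
      have := (hc.pow 3).div_const 3
      refine this.congr_deriv ?_; norm_num; ring
    have hc3' : HasDerivAt (fun x => -(Real.cos x ^ 3) / 3) (Real.cos φ ^2 * Real.sin φ) φ := by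
      have h := hc3.fun_neg
      have hfun : (fun x => -(Real.cos x ^ 3 / 3)) = (fun x => -(Real.cos x ^ 3) / 3) := by
        funext x; ring
      rw [hfun] at h
      simpa using h
    have hnc : HasDerivAt (fun x => -Real.cos x) (Real.sin φ) φ := by simpa using hc.fun_neg
    have := (((((hs.sub hs3).const_mul (a^3)).add (hc3'.const_mul (3*a^2*b))).add
      (hs3.const_mul (3*a*b^2))).add ((hnc.add hc3).const_mul (b^3)))
    refine this.congr_deriv ?_
    have hpy := Real.sin_sq_add_cos_sq φ
    linear_combination (-((a^3 * Real.cos φ) + b^3 * Real.sin φ)) * hpy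
  rw [intervalIntegral.integral_eq_sub_of_hasDerivAt (fun φ _ => key φ) (by
    apply Continuous.intervalIntegrable; continuity)]
  simp [Real.sin_two_pi, Real.cos_two_pi]

/-- `∫₀^{2π} (p cos + q sin)(r cos + t sin) = π(pr + qt)`. -/
lemma iprod (p q r t : ℝ) :
    ∫ φ in (0:ℝ)..(2*Real.pi),
      (p*Real.cos φ + q*Real.sin φ) * (r*Real.cos φ + t*Real.sin φ)
      = Real.pi*(p*r + q*t) := by
  have e : Set.EqOn
      (fun φ => (p*Real.cos φ + q*Real.sin φ) * (r*Real.cos φ + t*Real.sin φ))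
      (fun φ => (p*t+q*r) * (Real.sin φ * Real.cos φ)
        + (p*r) * Real.cos φ^2 + (q*t) * Real.sin φ^2)
      (Set.uIcc 0 (2*Real.pi)) := fun φ _ => by ring
  rw [intervalIntegral.integral_congr e, itrig]

lemma X0_hasFDerivAt (B₁ B₂ : ℝ → ℝ) (hB₁ : ContDiff ℝ (⊤ : ℕ∞) B₁)
    (hB₂ : ContDiff ℝ (⊤ : ℕ∞) B₂) (y φ : ℝ) :
    HasFDerivAt (X0 B₁ B₂)
      ((Real.sqrt Real.pi)⁻¹ •
        ((Real.cos φ • ((deriv B₁ y) • (ContinuousLinearMap.fst ℝ ℝ ℝ))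
            + B₁ y • ((-Real.sin φ) • (ContinuousLinearMap.snd ℝ ℝ ℝ)))
          + (Real.sin φ • ((deriv B₂ y) • (ContinuousLinearMap.fst ℝ ℝ ℝ))
            + B₂ y • ((Real.cos φ) • (ContinuousLinearMap.snd ℝ ℝ ℝ))))) (y, φ) := by
  have d1 : HasFDerivAt (fun p : ℝ × ℝ => B₁ p.1)
      ((deriv B₁ y) • (ContinuousLinearMap.fst ℝ ℝ ℝ)) (y, φ) := by
    have h := ((hB₁.differentiable (by simp) y).hasDerivAt)
    have := h.hasFDerivAt.comp (y, φ) (hasFDerivAt_fst (𝕜 := ℝ) (p := (y, φ)))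
    refine this.congr_fderiv (ContinuousLinearMap.ext fun v => ?_)
    simp [mul_comm]
  have d2 : HasFDerivAt (fun p : ℝ × ℝ => B₂ p.1)
      ((deriv B₂ y) • (ContinuousLinearMap.fst ℝ ℝ ℝ)) (y, φ) := by
    have h := ((hB₂.differentiable (by simp) y).hasDerivAt)
    have := h.hasFDerivAt.comp (y, φ) (hasFDerivAt_fst (𝕜 := ℝ) (p := (y, φ)))
    refine this.congr_fderiv (ContinuousLinearMap.ext fun v => ?_)
    simp [mul_comm]
  have dc : HasFDerivAt (fun p : ℝ × ℝ => Real.cos p.2)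
      ((-Real.sin φ) • (ContinuousLinearMap.snd ℝ ℝ ℝ)) (y, φ) := by
    have h := (Real.hasDerivAt_cos φ)
    have := h.hasFDerivAt.comp (y, φ) (hasFDerivAt_snd (𝕜 := ℝ) (p := (y, φ)))
    refine this.congr_fderiv (ContinuousLinearMap.ext fun v => ?_)
    simp [mul_comm]
  have ds : HasFDerivAt (fun p : ℝ × ℝ => Real.sin p.2)
      ((Real.cos φ) • (ContinuousLinearMap.snd ℝ ℝ ℝ)) (y, φ) := by
    have h := (Real.hasDerivAt_sin φ)
    have := h.hasFDerivAt.comp (y, φ) (hasFDerivAt_snd (𝕜 := ℝ) (p := (y, φ)))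
    refine this.congr_fderiv (ContinuousLinearMap.ext fun v => ?_)
    simp [mul_comm]
  have := (((d1.mul dc).add (d2.mul ds)).const_mul ((Real.sqrt Real.pi)⁻¹))
  have h2 : HasFDerivAt (X0 B₁ B₂) _ (y, φ) := this
  refine h2.congr_fderiv (ContinuousLinearMap.ext fun v => ?_)
  simp
  ring

lemma pd10 (B₁ B₂ : ℝ → ℝ) (hB₁ : ContDiff ℝ (⊤ : ℕ∞) B₁)
    (hB₂ : ContDiff ℝ (⊤ : ℕ∞) B₂) (y φ : ℝ) :
    pd (1, 0) (X0 B₁ B₂) (y, φ)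
      = (Real.sqrt Real.pi)⁻¹ * (deriv B₁ y * Real.cos φ + deriv B₂ y * Real.sin φ) := by
  rw [pd, (X0_hasFDerivAt B₁ B₂ hB₁ hB₂ y φ).fderiv]
  simp
  ring

lemma pd01 (B₁ B₂ : ℝ → ℝ) (hB₁ : ContDiff ℝ (⊤ : ℕ∞) B₁)
    (hB₂ : ContDiff ℝ (⊤ : ℕ∞) B₂) (y φ : ℝ) :
    pd (0, 1) (X0 B₁ B₂) (y, φ)
      = (Real.sqrt Real.pi)⁻¹ * (B₂ y * Real.cos φ - B₁ y * Real.sin φ) := by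
  rw [pd, (X0_hasFDerivAt B₁ B₂ hB₁ hB₂ y φ).fderiv]
  simp
  ring

lemma integral_deriv_zero (f : ℝ → ℝ) (hf : ContDiff ℝ (⊤ : ℕ∞) f)
    (hs : HasCompactSupport f) : ∫ x : ℝ, deriv f x = 0 := by
  have hf1 : ContDiff ℝ 1 f := hf.of_le (mod_cast le_top)
  have hint : MeasureTheory.Integrable (deriv f) := by
    exact (hf.continuous_deriv (mod_cast le_top)).integrable_of_hasCompactSupport hs.deriv
  rw [← intervalIntegral.integral_Iic_add_Ioi (b := (0:ℝ)) hint.integrableOn hint.integrableOn,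
    hs.integral_Iic_deriv_eq hf1, hs.integral_Ioi_deriv_eq hf1]
  ring

/-- Next-to-leading-order terms on the leading-order solution manifold of the nlS reduction:
(a) `∫∫ ∂_yX₀ ∂_φX₀ = 2∫B₁'B₂`; (b) the next-to-leading potential term equals
`2 sin θ ∫B₁'B₂`; consequently, if `cω = −sin θ` (group-velocity frame) then
`𝕂₁(X₀) − 𝕍₁(X₀) = 0`, i.e. the next-to-leading-order Lagrangian vanishes on the
leading-order solution manifold. -/
theorem nls_next_to_leading_order_cancellation
    (B₁ B₂ : ℝ → ℝ)
    (hB₁ : ContDiff ℝ (⊤ : ℕ∞) B₁) (hB₁s : HasCompactSupport B₁)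
    (hB₂ : ContDiff ℝ (⊤ : ℕ∞) B₂) (hB₂s : HasCompactSupport B₂)
    (θ ω c v₃ : ℝ) :
    -- (a)
    (∫ y : ℝ, ∫ φ in (0 : ℝ)..(2 * Real.pi),
        pd (1, 0) (X0 B₁ B₂) (y, φ) * pd (0, 1) (X0 B₁ B₂) (y, φ))
      = 2 * (∫ y : ℝ, deriv B₁ y * B₂ y) ∧
    -- (b)
    (-(1 / 2) * (∫ y : ℝ, ∫ φ in (0 : ℝ)..(2 * Real.pi),
          X0 B₁ B₂ (y, φ)
            * (pd (1, 0) (X0 B₁ B₂) (y, φ + θ) - pd (1, 0) (X0 B₁ B₂) (y, φ - θ)))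
        + (v₃ / 6) * (∫ y : ℝ, ∫ φ in (0 : ℝ)..(2 * Real.pi), (X0 B₁ B₂ (y, φ)) ^ 3))
      = 2 * Real.sin θ * (∫ y : ℝ, deriv B₁ y * B₂ y) ∧
    -- consequence: 𝕂₁(X₀) − 𝕍₁(X₀) = 0 in the group-velocity frame
    (c * ω = -Real.sin θ →
      (-(ω * c) * (∫ y : ℝ, ∫ φ in (0 : ℝ)..(2 * Real.pi),
          pd (1, 0) (X0 B₁ B₂) (y, φ) * pd (0, 1) (X0 B₁ B₂) (y, φ)))
        - (-(1 / 2) * (∫ y : ℝ, ∫ φ in (0 : ℝ)..(2 * Real.pi),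
            X0 B₁ B₂ (y, φ)
              * (pd (1, 0) (X0 B₁ B₂) (y, φ + θ) - pd (1, 0) (X0 B₁ B₂) (y, φ - θ)))
          + (v₃ / 6) * (∫ y : ℝ, ∫ φ in (0 : ℝ)..(2 * Real.pi), (X0 B₁ B₂ (y, φ)) ^ 3))
        = 0) := by
  set s : ℝ := (Real.sqrt Real.pi)⁻¹ with hs_def
  have hπpos := Real.pi_pos
  have hsqrt : Real.sqrt Real.pi ^ 2 = Real.pi := Real.sq_sqrt hπpos.le
  have hsne : Real.sqrt Real.pi ≠ 0 := by positivity
  have hs2 : s^2 * Real.pi = 1 := by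
    rw [hs_def, inv_pow, hsqrt, inv_mul_cancel₀ hπpos.ne']
  -- inner integral computations
  have inner_a : ∀ y : ℝ,
      (∫ φ in (0 : ℝ)..(2 * Real.pi),
        pd (1, 0) (X0 B₁ B₂) (y, φ) * pd (0, 1) (X0 B₁ B₂) (y, φ))
      = deriv B₁ y * B₂ y - B₁ y * deriv B₂ y := by
    intro y
    have e : Set.EqOn
        (fun φ => pd (1, 0) (X0 B₁ B₂) (y, φ) * pd (0, 1) (X0 B₁ B₂) (y, φ))
        (fun φ => ((s * deriv B₁ y)*Real.cos φ + (s * deriv B₂ y)*Real.sin φ)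
          * ((s * B₂ y)*Real.cos φ + (-(s * B₁ y))*Real.sin φ))
        (Set.uIcc 0 (2*Real.pi)) := by
      intro φ _
      simp only [pd10 B₁ B₂ hB₁ hB₂, pd01 B₁ B₂ hB₁ hB₂]
      ring
    rw [intervalIntegral.integral_congr e, iprod]
    rw [show Real.pi * ((s * deriv B₁ y)*(s * B₂ y) + (s * deriv B₂ y)*(-(s * B₁ y)))
        = (s^2 * Real.pi) * (deriv B₁ y * B₂ y - B₁ y * deriv B₂ y) from by ring, hs2,
      one_mul]
  have inner_b : ∀ y : ℝ,
      (∫ φ in (0 : ℝ)..(2 * Real.pi),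
        X0 B₁ B₂ (y, φ)
          * (pd (1, 0) (X0 B₁ B₂) (y, φ + θ) - pd (1, 0) (X0 B₁ B₂) (y, φ - θ)))
      = 2 * Real.sin θ * (B₁ y * deriv B₂ y - deriv B₁ y * B₂ y) := by
    intro y
    have e : Set.EqOn
        (fun φ => X0 B₁ B₂ (y, φ)
          * (pd (1, 0) (X0 B₁ B₂) (y, φ + θ) - pd (1, 0) (X0 B₁ B₂) (y, φ - θ)))
        (fun φ => ((s * B₁ y)*Real.cos φ + (s * B₂ y)*Real.sin φ)
          * ((2 * s * deriv B₂ y * Real.sin θ)*Real.cos φ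
            + (-(2 * s * deriv B₁ y * Real.sin θ))*Real.sin φ))
        (Set.uIcc 0 (2*Real.pi)) := by
      intro φ _
      simp only [pd10 B₁ B₂ hB₁ hB₂, X0, Real.cos_add, Real.cos_sub, Real.sin_add,
        Real.sin_sub]
      ring
    rw [intervalIntegral.integral_congr e, iprod]
    rw [show Real.pi * ((s * B₁ y)*(2 * s * deriv B₂ y * Real.sin θ)
          + (s * B₂ y)*(-(2 * s * deriv B₁ y * Real.sin θ)))
        = (s^2 * Real.pi) * (2 * Real.sin θ * (B₁ y * deriv B₂ y - deriv B₁ y * B₂ y))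
        from by ring, hs2, one_mul]
  have inner_c : ∀ y : ℝ,
      (∫ φ in (0 : ℝ)..(2 * Real.pi), (X0 B₁ B₂ (y, φ)) ^ 3) = 0 := by
    intro y
    have e : Set.EqOn (fun φ => (X0 B₁ B₂ (y, φ)) ^ 3)
        (fun φ => ((s * B₁ y) * Real.cos φ + (s * B₂ y) * Real.sin φ)^3)
        (Set.uIcc 0 (2*Real.pi)) := by
      intro φ _
      simp only [X0]
      ring
    rw [intervalIntegral.integral_congr e, icube]
  -- outer integral facts
  have i1 : MeasureTheory.Integrable (fun y => deriv B₁ y * B₂ y) := by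
    exact ((hB₁.continuous_deriv (mod_cast le_top)).mul hB₂.continuous
      ).integrable_of_hasCompactSupport (hB₂s.mul_left)
  have i2 : MeasureTheory.Integrable (fun y => B₁ y * deriv B₂ y) := by
    exact (hB₁.continuous.mul (hB₂.continuous_deriv (mod_cast le_top))
      ).integrable_of_hasCompactSupport (hB₂s.deriv.mul_left)
  have hK : (∫ y : ℝ, B₁ y * deriv B₂ y) = -(∫ y : ℝ, deriv B₁ y * B₂ y) := by
    have hsum : (∫ y : ℝ, (deriv B₁ y * B₂ y + B₁ y * deriv B₂ y)) = 0 := by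
      have hfe : (fun y => deriv B₁ y * B₂ y + B₁ y * deriv B₂ y)
          = deriv (fun y => B₁ y * B₂ y) := by
        funext y
        rw [deriv_fun_mul (hB₁.differentiable (by simp) y)
          (hB₂.differentiable (by simp) y)]
      rw [hfe]
      exact integral_deriv_zero _ (hB₁.mul hB₂) (hB₂s.mul_left)
    rw [MeasureTheory.integral_add i1 i2] at hsum
    linarith
  -- part (a)
  have ha : (∫ y : ℝ, ∫ φ in (0 : ℝ)..(2 * Real.pi),
        pd (1, 0) (X0 B₁ B₂) (y, φ) * pd (0, 1) (X0 B₁ B₂) (y, φ))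
      = 2 * (∫ y : ℝ, deriv B₁ y * B₂ y) := by
    simp only [inner_a]
    rw [MeasureTheory.integral_sub i1 i2, hK]
    ring
  -- part (b)
  have hb : (-(1 / 2) * (∫ y : ℝ, ∫ φ in (0 : ℝ)..(2 * Real.pi),
        X0 B₁ B₂ (y, φ)
          * (pd (1, 0) (X0 B₁ B₂) (y, φ + θ) - pd (1, 0) (X0 B₁ B₂) (y, φ - θ)))
      + (v₃ / 6) * (∫ y : ℝ, ∫ φ in (0 : ℝ)..(2 * Real.pi), (X0 B₁ B₂ (y, φ)) ^ 3))
      = 2 * Real.sin θ * (∫ y : ℝ, deriv B₁ y * B₂ y) := by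
    simp only [inner_b, inner_c, MeasureTheory.integral_zero, mul_zero, add_zero]
    rw [MeasureTheory.integral_const_mul, MeasureTheory.integral_sub i2 i1, hK]
    ring
  refine ⟨ha, hb, fun hc => ?_⟩
  rw [ha, hb]
  linear_combination (-2 * (∫ y : ℝ, deriv B₁ y * B₂ y)) * hc
end
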